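/- arXiv:1112.1676 — 2 statements merged into one kernel-verified Lean document; each statement's English description precedes it below -/
import Mathlib

section
/- Let K be an algebraically closed field equipped with a nontrivial multiplicative norm making it a nontrivially normed field, let n ≥ 1, X ∈ M_n(K), and ε > 0. Then there exists an invertible matrix g ∈ GL_n(K) such that Y := g·X·g^{-1} is upper triangular (Y_{ij} = 0 for i > j) and every strictly upper triangular entry satisfies ‖Y_{ij}‖ < ε for i < j. -/
open Module Submodule

section Aux

universe v
lemma flag_basis (K : Type*) [Field K] [IsAlgClosed K] :
    ∀ (n : ℕ) (V : Type v) (_ : AddCommGroup V), ∀ (_ : Module K V) (_ : FiniteDimensional K V),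
      finrank K V = n → ∀ f : Module.End K V,
      ∃ b : Basis (Fin n) K V,
        ∀ i : Fin n, f (b i) ∈ Submodule.span K (b '' {j | j ≤ i}) := by
  intro n
  induction n with
  | zero =>
    intro V _ _ _ hdim f
    haveI : Subsingleton V := (Module.finrank_zero_iff (R := K)).mp hdim
    exact ⟨Basis.empty V, fun i => i.elim0⟩
  | succ n ih =>
    intro V _ _ _ hdim f
    haveI : Nontrivial V := by
      rw [← Module.finrank_pos_iff (R := K)]; omega
    obtain ⟨μ, hμ⟩ := f.exists_eigenvalue
    obtain ⟨v, hv⟩ := hμ.exists_hasEigenvector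
    have hv0 : v ≠ 0 := hv.right
    have hfv : f v = μ • v := hv.apply_eq_smul
    set N : Submodule K V := Submodule.span K {v} with hN
    have hNle : N ≤ N.comap f := by
      rw [hN, Submodule.span_le]
      intro x hx
      rw [Set.mem_singleton_iff] at hx
      rw [SetLike.mem_coe, Submodule.mem_comap, hx, hfv]
      exact Submodule.smul_mem _ _ (Submodule.mem_span_singleton_self v)
    set π := N.mkQ with hπ
    have hπv : π v = 0 := by
      rw [hπ, Submodule.mkQ_apply]
      exact (Submodule.Quotient.mk_eq_zero N).mpr (Submodule.mem_span_singleton_self v)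
    have hQdim : finrank K (V ⧸ N) = n := by
      have h1 : finrank K N = 1 := finrank_span_singleton hv0
      have h2 := Submodule.finrank_quotient_add_finrank N
      omega
    set f' : Module.End K (V ⧸ N) := N.mapQ N f hNle with hf'
    obtain ⟨c, hc⟩ := ih (V ⧸ N) inferInstance inferInstance inferInstance hQdim f'
    choose w hw using fun i => Submodule.Quotient.mk_surjective N (c i)
    have hπw : ∀ i, π (w i) = c i := fun i => hw i
    have hwli : LinearIndependent K w := by
      apply LinearIndependent.of_comp π
      have : π ∘ w = c := funext hπw
      rw [this]
      exact c.linearIndependent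
    have hli : LinearIndependent K (Fin.cons v w : Fin (n+1) → V) := by
      apply hwli.fin_cons' v w
      intro a y hymem hy
      have hπy : π ↑y = 0 := by
        have := congrArg π hy
        simpa [map_add, map_smul, hπv] using this
      obtain ⟨m, hm⟩ := Submodule.mem_span_range_iff_exists_fun K |>.mp hymem
      have : ∑ i, m i • c i = 0 := by
        rw [← hπy, ← hm]
        simp [map_sum, map_smul, hπw]
      have hm0 : ∀ i, m i = 0 :=
        Fintype.linearIndependent_iff.mp c.linearIndependent m this
      have hy0 : (y : V) = 0 := by
        rw [← hm]
        simp [hm0]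
      have : a • v = 0 := by
        have := hy -- a • v + y = 0
        rw [hy0, add_zero] at this
        exact this
      rcases smul_eq_zero.mp this with h | h
      · exact h
      · exact absurd h hv0
    have hspan : ⊤ ≤ Submodule.span K (Set.range (Fin.cons v w : Fin (n+1) → V)) := by
      intro z _
      have hz : π z ∈ Submodule.span K (Set.range c) := by
        rw [c.span_eq]; trivial
      obtain ⟨m, hm⟩ := mem_span_range_iff_exists_fun K |>.mp hz
      have hπs : π (∑ i, m i • w i) = π z := by
        rw [map_sum]
        simpa [map_smul, hπw] using hm
      have hsub : z - ∑ i, m i • w i ∈ N := by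
        rw [← Submodule.Quotient.eq N] at *
        exact (hπs).symm
      have hvmem : v ∈ Submodule.span K (Set.range (Fin.cons v w : Fin (n+1) → V)) :=
        subset_span ⟨0, rfl⟩
      have hNmem : N ≤ Submodule.span K (Set.range (Fin.cons v w : Fin (n+1) → V)) := by
        rw [hN, Submodule.span_le, Set.singleton_subset_iff]
        exact hvmem
      have hwmem : ∀ i, w i ∈ Submodule.span K (Set.range (Fin.cons v w : Fin (n+1) → V)) :=
        fun i => subset_span ⟨i.succ, by simp⟩
      have : z = (z - ∑ i, m i • w i) + ∑ i, m i • w i := by abel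
      rw [this]
      exact add_mem (hNmem hsub) (sum_mem fun i _ => smul_mem _ _ (hwmem i))
    refine ⟨Basis.mk hli hspan, ?_⟩
    have hb : ⇑(Basis.mk hli hspan) = Fin.cons v w := Basis.coe_mk _ _
    intro i
    induction i using Fin.cases with
    | zero =>
      rw [hb]
      simp only [Fin.cons_zero]
      rw [hfv]
      exact smul_mem _ _ (subset_span ⟨0, Set.mem_setOf.mpr (le_refl 0), Fin.cons_zero _ _⟩)
    | succ i =>
      rw [hb, Fin.cons_succ]
      have hci := hc i
      have himg : Submodule.span K (c '' {j | j ≤ i}) =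
          Submodule.map π (Submodule.span K (w '' {j | j ≤ i})) := by
        rw [← Submodule.span_image, ← Set.image_comp]
        have hcw : ⇑c = ⇑π ∘ w := funext fun i => (hπw i).symm
        rw [hcw]
      rw [himg] at hci
      have hπfw : π (f (w i)) = f' (c i) := by
        rw [← hπw i, hπ, hf', Submodule.mkQ_apply, Submodule.mkQ_apply, Submodule.mapQ_apply]
      rw [← hπfw] at hci
      obtain ⟨y, hy, hyeq⟩ := hci
      have hsub : f (w i) - y ∈ N := by
        rw [← Submodule.Quotient.eq N] at *
        exact hyeq.symm
      have hgoal_mem : ∀ x ∈ ({v} : Set V) ∪ w '' {j | j ≤ i},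
          x ∈ (Fin.cons v w : Fin (n+1) → V) '' {j | j ≤ i.succ} := by
        rintro x (hx | ⟨j, hj, rfl⟩)
        · exact ⟨0, Fin.zero_le _, by rw [Set.mem_singleton_iff] at hx; simp [hx]⟩
        · exact ⟨j.succ, Fin.succ_le_succ_iff.mpr hj, by simp⟩
      have hNsub : N ≤ Submodule.span K ((Fin.cons v w : Fin (n+1) → V) '' {j | j ≤ i.succ}) := by
        rw [hN, Submodule.span_le, Set.singleton_subset_iff]
        exact subset_span (hgoal_mem v (Or.inl rfl))
      have hysub : y ∈ Submodule.span K ((Fin.cons v w : Fin (n+1) → V) '' {j | j ≤ i.succ}) := by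
        refine Submodule.span_mono ?_ hy
        intro x hx
        exact hgoal_mem x (Or.inr hx)
      have : f (w i) = (f (w i) - y) + y := by abel
      rw [this]
      exact add_mem (hNsub hsub) hysub

lemma exists_conj_triangular (K : Type*) [Field K] [IsAlgClosed K] (n : ℕ)
    (X : Matrix (Fin n) (Fin n) K) :
    ∃ g : (Matrix (Fin n) (Fin n) K)ˣ,
      ∀ i j : Fin n, j < i →
        ((g : Matrix (Fin n) (Fin n) K) * X *
          ((g⁻¹ : (Matrix (Fin n) (Fin n) K)ˣ) : Matrix (Fin n) (Fin n) K)) i j = 0 := by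
  set e : Basis (Fin n) K (Fin n → K) := Pi.basisFun K (Fin n)
  set f : Module.End K (Fin n → K) := Matrix.toLin e e X with hf
  have hdim : finrank K (Fin n → K) = n := by simp
  obtain ⟨b, hb⟩ := flag_basis K n (Fin n → K) inferInstance inferInstance inferInstance hdim f
  refine ⟨⟨b.toMatrix e, e.toMatrix b, Basis.toMatrix_mul_toMatrix_flip _ _,
    Basis.toMatrix_mul_toMatrix_flip _ _⟩, ?_⟩
  intro i j hij
  have hX : X = LinearMap.toMatrix e e f := by rw [hf, LinearMap.toMatrix_toLin]
  have key : (b.toMatrix e) * X * (e.toMatrix b) = LinearMap.toMatrix b b f := by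
    rw [hX]
    exact basis_toMatrix_mul_linearMap_toMatrix_mul_basis_toMatrix b e b e f
  show ((b.toMatrix e) * X * (e.toMatrix b)) i j = 0
  rw [key, LinearMap.toMatrix_apply]
  have hsupp := b.repr_support_subset_of_mem_span {k | k ≤ j} (hb j)
  by_contra h
  exact absurd (hsupp (Finsupp.mem_support_iff.mpr h)) (by simpa using not_le.mpr hij)

end Aux

/-- Over an algebraically closed nontrivially normed field, every matrix can be conjugated to
an upper triangular matrix whose strictly upper triangular entries have norm `< ε`. -/
theorem exists_conjugate_upper_triangular_small (K : Type*) [NontriviallyNormedField K]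
    [IsAlgClosed K] (n : ℕ) (hn : 1 ≤ n) (X : Matrix (Fin n) (Fin n) K)
    (ε : ℝ) (hε : 0 < ε) :
    ∃ g : (Matrix (Fin n) (Fin n) K)ˣ,
      (∀ i j : Fin n, j < i → ((g : Matrix (Fin n) (Fin n) K) * X * ((g⁻¹ : (Matrix (Fin n) (Fin n) K)ˣ) : Matrix (Fin n) (Fin n) K)) i j = 0) ∧
      (∀ i j : Fin n, i < j → ‖((g : Matrix (Fin n) (Fin n) K) * X * ((g⁻¹ : (Matrix (Fin n) (Fin n) K)ˣ) : Matrix (Fin n) (Fin n) K)) i j‖ < ε) := by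
  obtain ⟨u, hu⟩ := exists_conj_triangular K n X
  set Y : Matrix (Fin n) (Fin n) K :=
    (u : Matrix (Fin n) (Fin n) K) * X * ((u⁻¹ : (Matrix (Fin n) (Fin n) K)ˣ) : Matrix (Fin n) (Fin n) K) with hY
  set B : ℝ := ∑ i : Fin n, ∑ j : Fin n, ‖Y i j‖ with hB
  have hB0 : 0 ≤ B := Finset.sum_nonneg fun i _ => Finset.sum_nonneg fun j _ => norm_nonneg _
  have hYB : ∀ i j : Fin n, ‖Y i j‖ ≤ B := by
    intro i j
    calc ‖Y i j‖ ≤ ∑ j' : Fin n, ‖Y i j'‖ :=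
          Finset.single_le_sum (fun j' _ => norm_nonneg _) (Finset.mem_univ j)
      _ ≤ B := Finset.single_le_sum (f := fun i' => ∑ j' : Fin n, ‖Y i' j'‖)
          (fun i' _ => Finset.sum_nonneg fun j' _ => norm_nonneg _) (Finset.mem_univ i)
  have hr : 0 < min 1 (ε / (B + 1)) := lt_min one_pos (by positivity)
  obtain ⟨c, hc0, hcr⟩ := NormedField.exists_norm_lt K hr
  have hcne : c ≠ 0 := norm_pos_iff.mp hc0
  have hc1 : ‖c‖ < 1 := lt_of_lt_of_le hcr (min_le_left _ _)
  have hcε : ‖c‖ < ε / (B + 1) := lt_of_lt_of_le hcr (min_le_right _ _)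
  set d : Fin n → K := fun i => (c ^ (i : ℕ))⁻¹ with hd
  set d' : Fin n → K := fun i => c ^ (i : ℕ) with hd'
  have hdd' : Matrix.diagonal d * Matrix.diagonal d' = 1 := by
    rw [Matrix.diagonal_mul_diagonal]
    have : (fun i : Fin n => d i * d' i) = fun _ => (1 : K) :=
      funext fun i => inv_mul_cancel₀ (pow_ne_zero _ hcne)
    rw [this, Matrix.diagonal_one]
  have hd'd : Matrix.diagonal d' * Matrix.diagonal d = 1 := by
    rw [Matrix.diagonal_mul_diagonal]
    have : (fun i : Fin n => d' i * d i) = fun _ => (1 : K) :=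
      funext fun i => mul_inv_cancel₀ (pow_ne_zero _ hcne)
    rw [this, Matrix.diagonal_one]
  set D : (Matrix (Fin n) (Fin n) K)ˣ := ⟨Matrix.diagonal d, Matrix.diagonal d', hdd', hd'd⟩ with hD
  refine ⟨D * u, ?_⟩
  have hconj : ((D * u : (Matrix (Fin n) (Fin n) K)ˣ) : Matrix (Fin n) (Fin n) K) * X *
      (((D * u)⁻¹ : (Matrix (Fin n) (Fin n) K)ˣ) : Matrix (Fin n) (Fin n) K) =
      Matrix.diagonal d * Y * Matrix.diagonal d' := by
    rw [mul_inv_rev, Units.val_mul, Units.val_mul, hY]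
    have hDinv : ((D⁻¹ : (Matrix (Fin n) (Fin n) K)ˣ) : Matrix (Fin n) (Fin n) K)
        = Matrix.diagonal d' := rfl
    have hDval : ((D : (Matrix (Fin n) (Fin n) K)ˣ) : Matrix (Fin n) (Fin n) K)
        = Matrix.diagonal d := rfl
    rw [hDinv, hDval]
    noncomm_ring
  rw [hconj]
  have hentry : ∀ i j : Fin n,
      (Matrix.diagonal d * Y * Matrix.diagonal d') i j = d i * Y i j * d' j := by
    intro i j
    rw [Matrix.mul_diagonal, Matrix.diagonal_mul]
  constructor
  · intro i j hij
    rw [hentry, hu i j hij]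
    ring
  · intro i j hij
    rw [hentry]
    have hij' : (i : ℕ) + 1 ≤ (j : ℕ) := hij
    have ht : 0 < ‖c‖ ^ (i : ℕ) := pow_pos hc0 _
    have hnorm : ‖d i * Y i j * d' j‖ = (‖c‖ ^ (i : ℕ))⁻¹ * ‖Y i j‖ * ‖c‖ ^ (j : ℕ) := by
      rw [norm_mul, norm_mul, hd, hd', norm_inv, norm_pow, norm_pow]
    rw [hnorm]
    have hpow : ‖c‖ ^ (j : ℕ) ≤ ‖c‖ ^ ((i : ℕ) + 1) :=
      pow_le_pow_of_le_one (le_of_lt hc0) (le_of_lt hc1) hij'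
    have step1 : (‖c‖ ^ (i : ℕ))⁻¹ * ‖Y i j‖ * ‖c‖ ^ (j : ℕ) ≤ ‖Y i j‖ * ‖c‖ := by
      rw [pow_succ] at hpow
      calc (‖c‖ ^ (i : ℕ))⁻¹ * ‖Y i j‖ * ‖c‖ ^ (j : ℕ)
          ≤ (‖c‖ ^ (i : ℕ))⁻¹ * ‖Y i j‖ * (‖c‖ ^ (i : ℕ) * ‖c‖) := by
            apply mul_le_mul_of_nonneg_left hpow
            positivity
        _ = ‖Y i j‖ * ‖c‖ := by field_simp
    refine lt_of_le_of_lt step1 ?_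
    have h2 : ‖Y i j‖ * ‖c‖ ≤ B * ‖c‖ :=
      mul_le_mul_of_nonneg_right (hYB i j) (le_of_lt hc0)
    refine lt_of_le_of_lt h2 ?_
    calc B * ‖c‖ ≤ B * (ε / (B + 1)) := mul_le_mul_of_nonneg_left (le_of_lt hcε) hB0
      _ < ε := by
          rw [mul_div_assoc', div_lt_iff₀ (by positivity)]
          nlinarith
end

section
/- Let p be a prime and K a field of characteristic 0 that is complete with respect to a nontrivial multiplicative ultrametric norm ‖·‖, algebraically closed, and satisfies ‖(p : K)‖ < 1. Set q := ‖(p : K)‖^{1/(p−1)} and, for n ≥ 1, let B_n := {X ∈ M_n(K) : every root λ ∈ K of the characteristic polynomial of X satisfies ‖λ‖ < q}. Then: (i) for every X ∈ B_n the series e₁(X) := Σ_{v≥1} (1/v!)·X^v converges in M_n(K) and e₁(X) ∈ B_n; (ii) for every X ∈ B_n the series l₁(X) := Σ_{v≥1} ((−1)^{v−1}/v)·X^v converges in M_n(K) and l₁(X) ∈ B_n; (iii) l₁(e₁(X)) = X and e₁(l₁(X)) = X for all X ∈ B_n, so e₁ and l₁ are mutually inverse bijections of B_n onto itself. -/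
set_option linter.unusedSectionVars false
set_option linter.unusedVariables false

open Filter

namespace PropB

open Polynomial

variable {K : Type*} [NontriviallyNormedField K] [IsUltrametricDist K]

lemma usum {ι : Type*} {s : Finset ι} {f : ι → K} {t : ℝ} (ht : 0 ≤ t)
    (h : ∀ i ∈ s, ‖f i‖ ≤ t) : ‖∑ i ∈ s, f i‖ ≤ t :=
  IsUltrametricDist.norm_sum_le_of_forall_le_of_nonneg ht h

lemma ucauchy (u : ℕ → K) (h : Tendsto (fun N => ‖u (N+1) - u N‖) atTop (nhds 0)) :
    CauchySeq u := by
  rw [Metric.cauchySeq_iff']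
  intro ε hε
  obtain ⟨N, hN⟩ := (Metric.tendsto_atTop.mp h) ε hε
  refine ⟨N, fun m hm => ?_⟩
  induction m, hm using Nat.le_induction with
  | base => simpa using hε
  | succ m hm ih =>
    refine lt_of_le_of_lt (IsUltrametricDist.dist_triangle_max (u (m+1)) (u m) (u N)) ?_
    refine max_lt ?_ ih
    have := hN m hm
    rw [Real.dist_eq, sub_zero] at this
    rw [dist_eq_norm]
    exact lt_of_le_of_lt (le_abs_self _) this

lemma norm_coprime {p m : ℕ} (hpK : ‖(p : K)‖ < 1) (hco : Nat.Coprime p m) :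
    ‖(m : K)‖ = 1 := by
  refine le_antisymm (IsUltrametricDist.norm_natCast_le_one K m) ?_
  obtain ⟨a, b, hab⟩ := (Nat.isCoprime_iff_coprime.mpr hco)
  have h1 : (1 : K) = a * p + b * m := by
    have := congrArg (fun z : ℤ => (z : K)) hab
    push_cast at this
    linear_combination -this
  have hle : (1:ℝ) ≤ max (‖(a:K)‖ * ‖(p:K)‖) (‖(b:K)‖ * ‖(m:K)‖) := by
    calc (1:ℝ) = ‖(1:K)‖ := by simp
    _ = ‖(a:K) * p + (b:K) * m‖ := by rw [← h1]
    _ ≤ max ‖(a:K) * (p:K)‖ ‖(b:K) * (m:K)‖ := IsUltrametricDist.norm_add_le_max _ _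
    _ = max (‖(a:K)‖ * ‖(p:K)‖) (‖(b:K)‖ * ‖(m:K)‖) := by rw [norm_mul, norm_mul]
  have hap : ‖(a:K)‖ * ‖(p:K)‖ < 1 := by
    rcases eq_or_lt_of_le (norm_nonneg (a:K)) with h|h
    · simp [← h]
    · calc ‖(a:K)‖ * ‖(p:K)‖ ≤ 1 * ‖(p:K)‖ := by
            have := IsUltrametricDist.norm_intCast_le_one K a
            nlinarith [norm_nonneg (p:K)]
        _ < 1 := by simpa using hpK
  have hb1 : (1:ℝ) ≤ ‖(b:K)‖ * ‖(m:K)‖ := by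
    rcases max_cases (‖(a:K)‖ * ‖(p:K)‖) (‖(b:K)‖ * ‖(m:K)‖) with ⟨he, _⟩|⟨he, _⟩
    · rw [he] at hle; linarith
    · rw [he] at hle; exact hle
  have hbb := IsUltrametricDist.norm_intCast_le_one K b
  nlinarith [norm_nonneg (b:K), norm_nonneg (m:K)]

lemma pow_ge_aux (p : ℕ) (hp : 2 ≤ p) : ∀ e : ℕ, (p - 1) * e + 1 ≤ p ^ e := by
  obtain ⟨k, rfl⟩ : ∃ k, p = k + 2 := ⟨p - 2, by omega⟩
  intro e
  induction e with
  | zero => simp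
  | succ e ih =>
    have h1 : 1 ≤ (k+2) ^ e := Nat.one_le_pow _ _ (by omega)
    have h2 : (k+2) ^ (e+1) = (k+2) ^ e * (k+2) := by ring
    have h3 : (k+2) - 1 = k + 1 := by omega
    rw [h3] at ih ⊢
    nlinarith

lemma factorization_le (p : ℕ) (hp : p.Prime) {v : ℕ} (hv : 1 ≤ v) :
    (p - 1) * (v.factorization p) ≤ v - 1 := by
  set e := v.factorization p with he
  have hdvd : p ^ e ∣ v := Nat.ordProj_dvd v p
  have hle : p ^ e ≤ v := Nat.le_of_dvd (by omega) hdvd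
  have := pow_ge_aux p hp.two_le e
  omega

lemma factorial_factorization_le (p : ℕ) [hp : Fact p.Prime] {v : ℕ} (hv : 1 ≤ v) :
    (p - 1) * ((v.factorial).factorization p) ≤ v - 1 := by
  have hfac : (v.factorial).factorization p = padicValNat p (v.factorial) := by
    rw [Nat.factorization_def _ hp.out]
  rw [hfac, sub_one_mul_padicValNat_factorial]
  have hne : Nat.digits p v ≠ [] := Nat.digits_ne_nil_iff_ne_zero.mpr (by omega)
  have hlast := Nat.getLast_digit_ne_zero p (show v ≠ 0 by omega)
  have hmem := List.getLast_mem hne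
  have : 1 ≤ (Nat.digits p v).sum := by
    have := List.single_le_sum (fun x (_ : x ∈ Nat.digits p v) => Nat.zero_le x) _ hmem
    omega
  omega



variable {K : Type*} [Field K]

/-- `∑_{v=1}^N a_v x^v`. -/
noncomputable def seriesPoly (a : ℕ → K) (N : ℕ) : K[X] :=
  ∑ v ∈ Finset.Icc 1 N, C (a v) * X ^ v

lemma seriesPoly_coeff (a : ℕ → K) (N d : ℕ) :
    (seriesPoly a N).coeff d = if 1 ≤ d ∧ d ≤ N then a d else 0 := by
  rw [seriesPoly, finset_sum_coeff]
  simp only [coeff_C_mul, coeff_X_pow]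
  rw [Finset.sum_congr rfl (fun v _ => by rw [mul_ite, mul_one, mul_zero])]
  rw [Finset.sum_ite_eq (Finset.Icc 1 N) d (fun v => a v)]
  simp [Finset.mem_Icc]

lemma seriesPoly_coeff_zero (a : ℕ → K) (N : ℕ) : (seriesPoly a N).coeff 0 = 0 := by
  simp [seriesPoly_coeff]

lemma X_dvd_seriesPoly (a : ℕ → K) (N : ℕ) : X ∣ seriesPoly a N :=
  X_dvd_iff.mpr (seriesPoly_coeff_zero a N)

lemma seriesPoly_eval_zero (a : ℕ → K) (N : ℕ) : (seriesPoly a N).eval 0 = 0 := by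
  rw [← coeff_zero_eq_eval_zero, seriesPoly_coeff_zero]

lemma seriesPoly_comp (a : ℕ → K) (N : ℕ) (A : K[X]) :
    (seriesPoly a N).comp A = ∑ v ∈ Finset.Icc 1 N, C (a v) * A ^ v := by
  rw [seriesPoly, comp, eval₂_finset_sum]
  exact Finset.sum_congr rfl fun v _ => by
    rw [eval₂_mul, eval₂_C, eval₂_X_pow]

variable [CharZero K]

noncomputable def eaf : ℕ → K := fun v => ((v.factorial : K))⁻¹
noncomputable def laf : ℕ → K := fun v => ((-1 : K) ^ (v - 1)) / (v : K)

lemma eaf_one : (eaf 1 : K) = 1 := by simp [eaf]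
lemma laf_one : (laf 1 : K) = 1 := by simp [laf]

lemma eaf_succ_mul (e : ℕ) : (eaf (e + 2) : K) * ((e : K) + 2) = eaf (e + 1) := by
  have h : ((e + 2).factorial : K) = ((e : K) + 2) * ((e + 1).factorial : K) := by
    rw [Nat.factorial_succ (e + 1)]; push_cast; ring
  have h2 : ((e : K) + 2) ≠ 0 := by
    exact_mod_cast (Nat.cast_ne_zero (R := K)).mpr (show e + 2 ≠ 0 by omega)
  have h3 : ((e + 1).factorial : K) ≠ 0 := Nat.cast_ne_zero.mpr (Nat.factorial_ne_zero _)
  rw [eaf, eaf, h]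
  field_simp

lemma derivative_E (N : ℕ) (hN : 1 ≤ N) :
    derivative (seriesPoly (eaf : ℕ → K) N) =
      1 + seriesPoly (eaf : ℕ → K) N - C (eaf N : K) * X ^ N := by
  ext d
  rw [coeff_derivative, seriesPoly_coeff, coeff_sub, coeff_add, coeff_one,
    seriesPoly_coeff, coeff_C_mul, coeff_X_pow]
  rcases d with _ | e
  · rw [if_pos (show 1 ≤ 0 + 1 ∧ 0 + 1 ≤ N by omega),
      if_pos (show (0:ℕ) = 0 from rfl),
      if_neg (show ¬(1 ≤ 0 ∧ 0 ≤ N) by omega),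
      if_neg (show ¬((0:ℕ) = N) by omega)]
    simp [eaf]
  · rw [if_neg (show ¬((e+1 : ℕ) = 0) by omega)]
    by_cases h1 : e + 2 ≤ N
    · rw [if_pos (show 1 ≤ e+1+1 ∧ e+1+1 ≤ N by omega),
        if_pos (show 1 ≤ e+1 ∧ e+1 ≤ N by omega),
        if_neg (show ¬((e+1 : ℕ) = N) by omega)]
      push_cast
      rw [show (e:K) + 1 + 1 = (e:K) + 2 by ring, show e+1+1 = e+2 from rfl]
      rw [eaf_succ_mul]; ring
    · rw [if_neg (show ¬(1 ≤ e+1+1 ∧ e+1+1 ≤ N) by omega)]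
      by_cases h4 : (e+1 : ℕ) = N
      · rw [if_pos (show 1 ≤ e+1 ∧ e+1 ≤ N by omega), if_pos h4, h4]; ring
      · rw [if_neg (show ¬(1 ≤ e+1 ∧ e+1 ≤ N) by omega), if_neg h4]; ring

noncomputable def GS (N : ℕ) : Polynomial K := ∑ i ∈ Finset.range N, (-X) ^ i

lemma derivative_L (N : ℕ) : derivative (seriesPoly (laf : ℕ → K) N) = GS N := by
  ext d
  rw [coeff_derivative, seriesPoly_coeff, GS, finset_sum_coeff]
  rw [Finset.sum_congr rfl (fun i (_ : i ∈ Finset.range N) => by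
    rw [show ((-X : K[X]) ^ i) = C ((-1 : K)^i) * X ^ i by
      rw [neg_pow]; rw [map_pow, map_neg, map_one],
      coeff_C_mul, coeff_X_pow, mul_ite, mul_one, mul_zero])]
  rw [Finset.sum_ite_eq (Finset.range N) d (fun i => (-1 : K)^i)]
  by_cases h : d + 1 ≤ N
  · rw [if_pos (show 1 ≤ d+1 ∧ d+1 ≤ N by omega),
      if_pos (Finset.mem_range.mpr (by omega))]
    have hd : ((d:K) + 1) ≠ 0 := by
      exact_mod_cast (Nat.cast_ne_zero (R := K)).mpr (show d + 1 ≠ 0 by omega)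
    rw [laf]
    rw [show d + 1 - 1 = d by omega]
    push_cast
    field_simp
  · rw [if_neg (show ¬(1 ≤ d+1 ∧ d+1 ≤ N) by omega),
      if_neg (fun hm => absurd (Finset.mem_range.mp hm) (by omega))]
    ring

lemma geom_id (N : ℕ) : (X + 1) * (GS N : K[X]) = 1 - (-X) ^ N := by
  have h := geom_sum_mul (-X : K[X]) N
  rw [GS]
  linear_combination -h

lemma comp_LE_coeff (N : ℕ) (hN : 1 ≤ N) :
    ∀ d ≤ N, ((seriesPoly (laf : ℕ → K) N).comp (seriesPoly (eaf : ℕ → K) N)).coeff d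
      = if d = 1 then 1 else 0 := by
  set E := seriesPoly (eaf : ℕ → K) N with hE
  set L := seriesPoly (laf : ℕ → K) N with hL
  set g := L.comp E with hg
  have hXE : X ∣ E := X_dvd_seriesPoly _ _
  have hcompgs : (E + 1) * (GS N).comp E = 1 - (-E) ^ N := by
    have := congrArg (fun f : K[X] => f.comp E) (geom_id (K := K) N)
    simpa only [add_comp, mul_comp, X_comp, one_comp, sub_comp, neg_comp, pow_comp] using this
  have hdg : derivative g = derivative E * (GS N).comp E := by
    rw [hg, derivative_comp, derivative_L]
  have hdvd : (X : K[X]) ^ N ∣ derivative g - 1 := by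
    have heq : derivative g - 1
        = -((-E)^N) - (C (eaf N : K) * X ^ N) * (GS N).comp E := by
      rw [hdg, derivative_E N hN]
      linear_combination hcompgs
    rw [heq]
    refine dvd_sub (dvd_neg.mpr (pow_dvd_pow_of_dvd (dvd_neg.mpr hXE) N)) ?_
    exact ⟨C (eaf N : K) * (GS N).comp E, by ring⟩
  have hcd : ∀ d < N, (derivative g).coeff d = if d = 0 then 1 else 0 := by
    intro d hd
    have h0 := (X_pow_dvd_iff.mp hdvd) d hd
    rw [coeff_sub, coeff_one, sub_eq_zero] at h0
    rw [h0]
  intro d hd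
  rcases d with _ | e
  · rw [coeff_zero_eq_eval_zero, hg, eval_comp, seriesPoly_eval_zero,
      seriesPoly_eval_zero]
    simp
  · have he := hcd e (by omega)
    rw [coeff_derivative] at he
    have hne : ((e : K) + 1) ≠ 0 := by
      exact_mod_cast (Nat.cast_ne_zero (R := K)).mpr (show e + 1 ≠ 0 by omega)
    have hgc : g.coeff (e+1) = (if e = 0 then (1:K) else 0) / ((e:K)+1) :=
      (eq_div_iff hne).mpr he
    rw [hgc]
    rcases Nat.eq_zero_or_pos e with rfl | hepos
    · simp
    · rw [if_neg (by omega), if_neg (by omega), zero_div]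

lemma comp_EL_coeff (N : ℕ) (hN : 1 ≤ N) :
    ∀ d ≤ N, ((seriesPoly (eaf : ℕ → K) N).comp (seriesPoly (laf : ℕ → K) N)).coeff d
      = if d = 1 then 1 else 0 := by
  set L := seriesPoly (laf : ℕ → K) N with hL
  set E := seriesPoly (eaf : ℕ → K) N with hE
  set h := E.comp L with hh
  have hXL : X ∣ L := X_dvd_seriesPoly _ _
  have hdh : derivative h = GS N * (1 + h - C (eaf N : K) * L ^ N) := by
    rw [hh, derivative_comp, derivative_L, derivative_E N hN]
    congr 1
    rw [sub_comp, add_comp, one_comp, mul_comp, C_comp, pow_comp, X_comp]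
  have hdvd : (X:K[X])^N ∣ (X + 1) * derivative h - (1 + h) := by
    have heq : (X + 1) * derivative h - (1 + h)
        = -((-X)^N) * (1 + h) - (1 - (-X)^N) * (C (eaf N : K) * L ^ N) := by
      rw [hdh]
      linear_combination (1 + h - C (eaf N : K) * L ^ N) * geom_id (K := K) N
    rw [heq]
    refine dvd_sub ?_ ?_
    · exact Dvd.dvd.mul_right (dvd_neg.mpr (pow_dvd_pow_of_dvd (dvd_neg.mpr dvd_rfl) N)) _
    · exact Dvd.dvd.mul_left ((pow_dvd_pow_of_dvd hXL N).mul_left _) _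
  have hc : ∀ d < N, ((X + 1) * derivative h).coeff d = (1 + h).coeff d := by
    intro d hd
    have h0 := (X_pow_dvd_iff.mp hdvd) d hd
    rw [coeff_sub, sub_eq_zero] at h0
    exact h0
  have h0 : h.coeff 0 = 0 := by
    rw [coeff_zero_eq_eval_zero, hh, eval_comp, seriesPoly_eval_zero, seriesPoly_eval_zero]
  have hX1 : ∀ d, ((X + 1) * derivative h).coeff d
      = (X * derivative h).coeff d + (derivative h).coeff d := by
    intro d
    rw [add_mul, one_mul, coeff_add]
  have h1 : h.coeff 1 = 1 := by
    have := hc 0 (by omega)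
    rw [hX1, mul_coeff_zero, coeff_X_zero, zero_mul, zero_add, coeff_derivative,
      coeff_add, coeff_one, h0] at this
    simpa using this
  have hstep : ∀ e, e + 2 ≤ N →
      h.coeff (e+2) * ((e:K)+2) = h.coeff (e+1) * (1 - ((e:K)+1)) := by
    intro e he
    have := hc (e+1) (by omega)
    rw [hX1, coeff_X_mul, coeff_derivative, coeff_derivative, coeff_add, coeff_one] at this
    rw [if_neg (show ¬((e+1:ℕ) = 0) by omega), zero_add] at this
    push_cast at this ⊢
    linear_combination this
  have hzero : ∀ e, e + 2 ≤ N → h.coeff (e+2) = 0 := by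
    intro e
    induction e with
    | zero =>
      intro he
      have := hstep 0 he
      have h2 : ((0:K)+2) ≠ 0 := by norm_num
      rw [h1] at this
      field_simp at this
      simpa using this
    | succ e ih =>
      intro he
      have := hstep (e+1) he
      rw [show e+1+1 = e+2 from rfl, ih (by omega)] at this
      have h2 : (((e+1 : ℕ):K)+2) ≠ 0 := by
        exact_mod_cast (Nat.cast_ne_zero (R := K)).mpr (show e + 3 ≠ 0 by omega)
      rw [zero_mul] at this
      rcases mul_eq_zero.mp this with hc0 | hc0
      · exact hc0
      · exact absurd hc0 h2
  intro d hd
  rcases d with _ | _ | e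
  · rw [h0, if_neg (by omega)]
  · rw [h1, if_pos rfl]
  · rw [hzero e (by omega), if_neg (by omega)]


noncomputable def qq (p : ℕ) (K : Type*) [NontriviallyNormedField K] : ℝ :=
  ‖(p : K)‖ ^ ((1 : ℝ) / ((p : ℝ) - 1))

variable {K : Type*} [NontriviallyNormedField K] [CharZero K]
variable {p : ℕ} [Fact p.Prime]

lemma pnorm_pos : 0 < ‖(p : K)‖ := by
  rw [norm_pos_iff]
  exact_mod_cast Nat.cast_ne_zero.mpr (Fact.out (p := p.Prime)).ne_zero

lemma qq_pos (hpK : ‖(p : K)‖ < 1) : 0 < qq p K := by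
  rw [qq]
  exact Real.rpow_pos_of_pos pnorm_pos _

lemma psub_pos : (0:ℝ) < (p : ℝ) - 1 := by
  have := (Fact.out (p := p.Prime)).two_le
  have : (2:ℝ) ≤ (p:ℝ) := by exact_mod_cast this
  linarith

lemma qq_lt_one (hpK : ‖(p : K)‖ < 1) : qq p K < 1 := by
  rw [qq]
  apply Real.rpow_lt_one (norm_nonneg _) hpK
  have := psub_pos (p := p)
  positivity

lemma qq_pow_eq (hpK : ‖(p : K)‖ < 1) : (qq p K) ^ (p - 1) = ‖(p : K)‖ := by
  rw [qq, ← Real.rpow_natCast (‖(p : K)‖ ^ ((1 : ℝ) / ((p : ℝ) - 1))) (p - 1),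
    ← Real.rpow_mul (norm_nonneg _)]
  have hcast : ((p - 1 : ℕ) : ℝ) = (p : ℝ) - 1 := by
    have := (Fact.out (p := p.Prime)).two_le
    push_cast [Nat.cast_sub (by omega : 1 ≤ p)]
    ring
  rw [hcast, one_div, inv_mul_cancel₀ (ne_of_gt (psub_pos (p := p)))]
  exact Real.rpow_one _

section NormBounds
variable {K : Type*} [NontriviallyNormedField K] [CharZero K] [IsUltrametricDist K]
variable {p : ℕ} [Fact p.Prime]

lemma norm_natCast_factorization (hpK : ‖(p : K)‖ < 1) {c : ℕ} (hc : c ≠ 0) :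
    ‖(c : K)‖ = ‖(p : K)‖ ^ (c.factorization p) := by
  have hp : p.Prime := Fact.out
  have hsplit := Nat.ordProj_mul_ordCompl_eq_self c p
  have hco : Nat.Coprime p (c / p ^ c.factorization p) := Nat.coprime_ordCompl hp hc
  have hcast : (c : K) = ((p : K)) ^ (c.factorization p) * ((c / p ^ c.factorization p : ℕ) : K) := by
    rw [← Nat.cast_pow, ← Nat.cast_mul, hsplit]
  rw [hcast, norm_mul, norm_pow, norm_coprime hpK hco, mul_one]

lemma qq_le_norm_of_factorization (hpK : ‖(p : K)‖ < 1) {c v : ℕ} (hc : c ≠ 0) (hv : 1 ≤ v)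
    (hf : (p - 1) * c.factorization p ≤ v - 1) :
    qq p K ^ (v - 1) ≤ ‖(c : K)‖ := by
  rw [norm_natCast_factorization hpK hc]
  calc qq p K ^ (v-1) ≤ qq p K ^ ((p - 1) * c.factorization p) :=
        pow_le_pow_of_le_one (qq_pos hpK).le (qq_lt_one hpK).le hf
    _ = (qq p K ^ (p - 1)) ^ (c.factorization p) := by rw [pow_mul]
    _ = ‖(p : K)‖ ^ (c.factorization p) := by rw [qq_pow_eq hpK]

lemma inv_bound (hpK : ‖(p : K)‖ < 1) {c v : ℕ} (hc : c ≠ 0) (hv : 1 ≤ v)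
    (hf : (p - 1) * c.factorization p ≤ v - 1) :
    ‖((c : K))⁻¹‖ * qq p K ^ v ≤ qq p K := by
  set q := qq p K with hq
  have hq0 : 0 < q := qq_pos hpK
  have hlow := qq_le_norm_of_factorization hpK hc hv hf
  have hcpos : 0 < ‖(c : K)‖ := lt_of_lt_of_le (pow_pos hq0 _) hlow
  rw [norm_inv]
  have hvsplit : q ^ v = q ^ (v - 1) * q := by
    rw [← pow_succ]
    congr 1
    omega
  calc ‖(c : K)‖⁻¹ * q ^ v ≤ (q ^ (v-1))⁻¹ * q ^ v := by
        apply mul_le_mul_of_nonneg_right _ (pow_nonneg hq0.le _)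
        exact inv_anti₀ (pow_pos hq0 _) hlow
    _ = q := by
        rw [hvsplit, inv_mul_cancel_left₀ (ne_of_gt (pow_pos hq0 _))]

lemma eaf_bound (hpK : ‖(p : K)‖ < 1) {v : ℕ} (hv : 1 ≤ v) :
    ‖(eaf v : K)‖ * qq p K ^ v ≤ qq p K := by
  rw [eaf]
  exact inv_bound hpK (Nat.factorial_ne_zero v) hv (factorial_factorization_le p hv)

lemma laf_bound (hpK : ‖(p : K)‖ < 1) {v : ℕ} (hv : 1 ≤ v) :
    ‖(laf v : K)‖ * qq p K ^ v ≤ qq p K := by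
  rw [laf, norm_div, norm_pow, norm_neg, norm_one, one_pow, one_div, ← norm_inv]
  exact inv_bound hpK (by omega) hv (factorization_le p Fact.out hv)

end NormBounds

/-! ### Gauss-type coefficient bounds for polynomials -/
section GB
variable {K : Type*} [NontriviallyNormedField K] [IsUltrametricDist K]

/-- coefficient bound: `‖coeff d‖ ≤ t * w^d` (`w` plays the role of `q⁻¹`). -/
def GBd (w : ℝ) (f : K[X]) (t : ℝ) : Prop := ∀ d, ‖f.coeff d‖ ≤ t * w ^ d

lemma GBd.nonneg {w : ℝ} {f : K[X]} {t : ℝ} (h : GBd w f t) : 0 ≤ t := by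
  have := h 0
  simp only [pow_zero, mul_one] at this
  exact le_trans (norm_nonneg _) this

lemma GBd.mono {w : ℝ} {f : K[X]} {t u : ℝ} (hw : 0 ≤ w) (h : GBd w f t) (htu : t ≤ u) :
    GBd w f u := fun d =>
  le_trans (h d) (mul_le_mul_of_nonneg_right htu (pow_nonneg hw d))

lemma GBd.mul {w : ℝ} {f g : K[X]} {t u : ℝ} (hw : 0 ≤ w) (hf : GBd w f t) (hg : GBd w g u) :
    GBd w (f * g) (t * u) := by
  intro d
  rw [Polynomial.coeff_mul]
  have h1 := hf.nonneg
  have h2 := hg.nonneg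
  apply usum (by positivity)
  rintro ⟨i, j⟩ hij
  have hd : i + j = d := Finset.HasAntidiagonal.mem_antidiagonal.mp hij
  rw [norm_mul]
  calc ‖f.coeff i‖ * ‖g.coeff j‖ ≤ (t * w ^ i) * (u * w ^ j) := by
        have h1 := hf.nonneg
        apply mul_le_mul (hf i) (hg j) (norm_nonneg _)
        positivity
    _ = t * u * w ^ d := by rw [← hd, pow_add]; ring

lemma GBd.one {w : ℝ} (hw : 0 ≤ w) : GBd (K := K) w 1 1 := by
  intro d
  rw [Polynomial.coeff_one]
  rcases eq_or_ne d 0 with rfl | h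
  · simp
  · rw [if_neg h]
    have : (0:ℝ) ≤ 1 * w ^ d := by positivity
    simpa using this

lemma GBd.pow {w : ℝ} {f : K[X]} {t : ℝ} (hw : 0 ≤ w) (hf : GBd w f t) (v : ℕ) :
    GBd w (f ^ v) (t ^ v) := by
  induction v with
  | zero => simpa using GBd.one hw
  | succ v ih =>
    rw [pow_succ, pow_succ]
    exact ih.mul hw hf

lemma GBd.C {w : ℝ} (hw : 0 ≤ w) (c : K) : GBd w (Polynomial.C c) ‖c‖ := by
  intro d
  rw [Polynomial.coeff_C]
  rcases eq_or_ne d 0 with rfl | h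
  · simp
  · rw [if_neg h]
    have : (0:ℝ) ≤ ‖c‖ * w ^ d := mul_nonneg (norm_nonneg c) (pow_nonneg hw d)
    simpa using this

lemma GBd.sum {w : ℝ} {ι : Type*} {s : Finset ι} {f : ι → K[X]} {t : ℝ} (hw : 0 ≤ w) (ht : 0 ≤ t)
    (h : ∀ i ∈ s, GBd w (f i) t) : GBd w (∑ i ∈ s, f i) t := by
  intro d
  rw [Polynomial.finset_sum_coeff]
  exact usum (mul_nonneg ht (pow_nonneg hw d)) (fun i hi => h i hi d)

variable [CharZero K]

lemma GBd_seriesPoly {q : ℝ} (hq : 0 < q) {a : ℕ → K} (N : ℕ)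
    (ha : ∀ v, 1 ≤ v → ‖a v‖ * q ^ v ≤ q) : GBd q⁻¹ (seriesPoly a N) q := by
  intro d
  rw [seriesPoly_coeff]
  rcases Decidable.em (1 ≤ d ∧ d ≤ N) with h | h
  · rw [if_pos h]
    rw [inv_pow, ← div_eq_mul_inv, le_div_iff₀ (pow_pos hq d)]
    exact ha d h.1
  · rw [if_neg h, norm_zero]
    exact mul_nonneg hq.le (pow_nonneg (inv_nonneg.mpr hq.le) d)

lemma GBd_comp {q : ℝ} (hq : 0 < q) {b : ℕ → K} (N : ℕ)
    (hb : ∀ v, 1 ≤ v → ‖b v‖ * q ^ v ≤ q) {A : K[X]} (hA : GBd q⁻¹ A q) :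
    GBd q⁻¹ ((seriesPoly b N).comp A) q := by
  rw [seriesPoly_comp]
  apply GBd.sum (inv_nonneg.mpr hq.le) hq.le
  intro v hv
  have hv1 : 1 ≤ v := (Finset.mem_Icc.mp hv).1
  have hCb : GBd q⁻¹ (Polynomial.C (b v) * A ^ v) (‖b v‖ * q ^ v) :=
    (GBd.C (by positivity) (b v)).mul (by positivity) (hA.pow (by positivity) v)
  exact hCb.mono (by positivity) (hb v hv1)

lemma GBd_qinv_coeff {q : ℝ} (hq : 0 < q) {f : K[X]} (h : GBd q⁻¹ f q) (d : ℕ) :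
    ‖f.coeff d‖ * q ^ d ≤ q := by
  have := h d
  rw [inv_pow, ← div_eq_mul_inv] at this
  exact (le_div_iff₀ (pow_pos hq d)).mp this

end GB

/-! ### Entrywise norm bounds for matrices -/
section Eb
variable {K : Type*} [NontriviallyNormedField K] [IsUltrametricDist K] {n : ℕ}

/-- all entries bounded in norm by `t`. -/
def Eb (A : Matrix (Fin n) (Fin n) K) (t : ℝ) : Prop := ∀ i j, ‖A i j‖ ≤ t

lemma Eb.mono {A : Matrix (Fin n) (Fin n) K} {t u : ℝ} (h : Eb A t) (htu : t ≤ u) : Eb A u :=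
  fun i j => le_trans (h i j) htu

lemma Eb.mul {A B : Matrix (Fin n) (Fin n) K} {s t : ℝ} (hs : 0 ≤ s) (ht : 0 ≤ t)
    (hA : Eb A s) (hB : Eb B t) : Eb (A * B) (s * t) := by
  intro i j
  rw [Matrix.mul_apply]
  apply usum (mul_nonneg hs ht)
  intro k _
  rw [norm_mul]
  exact mul_le_mul (hA i k) (hB k j) (norm_nonneg _) hs

lemma Eb.one : Eb (1 : Matrix (Fin n) (Fin n) K) 1 := by
  intro i j
  rw [Matrix.one_apply]
  rcases eq_or_ne i j with rfl | h
  · simp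
  · rw [if_neg h]; simp

lemma Eb.pow {A : Matrix (Fin n) (Fin n) K} {t : ℝ} (ht : 0 ≤ t) (hA : Eb A t) :
    ∀ v, 1 ≤ v → Eb (A ^ v) (t ^ v) := by
  intro v hv
  induction v with
  | zero => omega
  | succ v ih =>
    rcases Nat.eq_zero_or_pos v with rfl | hv0
    · simpa using hA
    · rw [pow_succ, pow_succ]
      exact (ih hv0).mul (pow_nonneg ht v) ht hA

lemma Eb.smul {A : Matrix (Fin n) (Fin n) K} {t : ℝ} (c : K) (hA : Eb A t) :
    Eb (c • A) (‖c‖ * t) := by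
  intro i j
  rw [Matrix.smul_apply, norm_smul]
  exact mul_le_mul_of_nonneg_left (hA i j) (norm_nonneg c)

lemma Eb.sum {ι : Type*} {s : Finset ι} {f : ι → Matrix (Fin n) (Fin n) K} {t : ℝ} (ht : 0 ≤ t)
    (h : ∀ i ∈ s, Eb (f i) t) : Eb (∑ i ∈ s, f i) t := by
  intro i j
  rw [Matrix.sum_apply]
  exact usum ht (fun v hv => h v hv i j)

lemma Eb.sub {A B : Matrix (Fin n) (Fin n) K} {s t : ℝ} (hA : Eb A s) (hB : Eb B t) :
    Eb (A - B) (max s t) := by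
  intro i j
  rw [Matrix.sub_apply, sub_eq_add_neg]
  refine le_trans (IsUltrametricDist.norm_add_le_max _ _) (max_le_max (hA i j) ?_)
  rw [norm_neg]; exact hB i j

lemma Eb.neg {A : Matrix (Fin n) (Fin n) K} {t : ℝ} (hA : Eb A t) : Eb (-A) t := by
  intro i j
  rw [Matrix.neg_apply, norm_neg]; exact hA i j

lemma Eb.zero {t : ℝ} (ht : 0 ≤ t) : Eb (0 : Matrix (Fin n) (Fin n) K) t := by
  intro i j
  simp [Matrix.zero_apply, ht]

/-- Growth lemma via Cayley–Hamilton. -/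
lemma Eb_pow_growth (A : Matrix (Fin n) (Fin n) K) (r C : ℝ) (hr : 0 < r) (hC : 0 ≤ C)
    (hcoef : ∀ i < n, ‖(Matrix.charpoly A).coeff i‖ ≤ r ^ (n - i))
    (hbase : ∀ v < n, Eb (A ^ v) (C * r ^ v)) :
    ∀ v, Eb (A ^ v) (C * r ^ v) := by
  rcases Nat.eq_zero_or_pos n with rfl | hn
  · intro v i j; exact absurd i.2 (by omega)
  have hch : A ^ n = -∑ i ∈ Finset.range n, (Matrix.charpoly A).coeff i • A ^ i := by
    have h0 := Matrix.aeval_self_charpoly A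
    rw [Polynomial.aeval_eq_sum_range (p := Matrix.charpoly A) A] at h0
    rw [Matrix.charpoly_natDegree_eq_dim, Fintype.card_fin, Finset.sum_range_succ] at h0
    have hm : (Matrix.charpoly A).coeff n = 1 := by
      have := (Matrix.charpoly_monic A).coeff_natDegree
      rwa [Matrix.charpoly_natDegree_eq_dim, Fintype.card_fin] at this
    rw [hm, one_smul] at h0
    exact eq_neg_of_add_eq_zero_right h0
  intro v
  induction v using Nat.strong_induction_on with
  | _ v ih =>
    rcases Nat.lt_or_ge v n with h | h
    · exact hbase v h
    · have hv : A ^ v = -∑ i ∈ Finset.range n,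
          (Matrix.charpoly A).coeff i • A ^ (v - n + i) := by
        have : A ^ v = A ^ (v - n) * A ^ n := by
          rw [← pow_add]; congr 1; omega
        rw [this, hch, mul_neg, Finset.mul_sum]
        congr 1
        refine Finset.sum_congr rfl (fun i _ => ?_)
        rw [mul_smul_comm, ← pow_add]
      rw [hv]
      apply Eb.neg
      apply Eb.sum (by positivity)
      intro i hi
      have hiv : v - n + i < v := by
        have := Finset.mem_range.mp hi
        omega
      have h1 : Eb ((Matrix.charpoly A).coeff i • A ^ (v - n + i))
          (‖(Matrix.charpoly A).coeff i‖ * (C * r ^ (v - n + i))) :=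
        Eb.smul _ (ih _ hiv)
      refine h1.mono ?_
      calc ‖(Matrix.charpoly A).coeff i‖ * (C * r ^ (v - n + i))
          ≤ r ^ (n - i) * (C * r ^ (v - n + i)) := by
            apply mul_le_mul_of_nonneg_right (hcoef i (Finset.mem_range.mp hi))
            positivity
        _ = C * r ^ v := by
            rw [← mul_assoc, mul_comm _ C, mul_assoc, ← pow_add]
            congr 2
            have := Finset.mem_range.mp hi
            omega

end Eb

/-! ### Roots, coefficients and the spectrum -/
section Roots
variable {K : Type*} [NontriviallyNormedField K] [IsUltrametricDist K]

open Polynomial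

lemma multiset_prod_coeff_bound (s : ℝ) (hs0 : 0 ≤ s) (hs1 : s ≤ 1) :
    ∀ (m : Multiset K), (∀ x ∈ m, ‖x‖ ≤ s) →
      ∀ i, ‖((m.map fun a => X - C a).prod).coeff i‖ ≤ s ^ (Multiset.card m - i) := by
  intro m
  induction m using Multiset.induction_on with
  | empty =>
    intro _ i
    simp only [Multiset.map_zero, Multiset.prod_zero, Multiset.card_zero]
    rcases eq_or_ne i 0 with rfl | h
    · simp
    · rw [coeff_one, if_neg h]
      simp [pow_nonneg hs0]
  | cons a m ih =>
    intro hmem i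
    have ha : ‖a‖ ≤ s := hmem a (Multiset.mem_cons_self a m)
    have ihm := ih (fun x hx => hmem x (Multiset.mem_cons_of_mem hx))
    rw [Multiset.map_cons, Multiset.prod_cons, Multiset.card_cons]
    have hexp : (X - C a) * (m.map fun a => X - C a).prod
        = X * (m.map fun a => X - C a).prod - C a * (m.map fun a => X - C a).prod := by
      ring
    rw [hexp]
    set Q := (m.map fun a => X - C a).prod with hQ
    rcases i with _ | e
    · rw [coeff_sub, mul_coeff_zero, coeff_X_zero, zero_mul, zero_sub, norm_neg, coeff_C_mul,
        norm_mul]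
      calc ‖a‖ * ‖Q.coeff 0‖ ≤ s * s ^ (Multiset.card m - 0) :=
            mul_le_mul ha (ihm 0) (norm_nonneg _) hs0
        _ = s ^ (Multiset.card m + 1 - 0) := by rw [← pow_succ']; congr 1
    · rw [coeff_sub, coeff_X_mul, coeff_C_mul, sub_eq_add_neg]
      refine le_trans (IsUltrametricDist.norm_add_le_max _ _) (max_le ?_ ?_)
      · refine le_trans (ihm e) (le_of_eq ?_)
        congr 1
        omega
      · rw [norm_neg, norm_mul]
        rcases Nat.lt_or_ge e (Multiset.card m) with h | h
        · calc ‖a‖ * ‖Q.coeff (e+1)‖ ≤ s * s ^ (Multiset.card m - (e+1)) :=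
              mul_le_mul ha (ihm (e+1)) (norm_nonneg _) hs0
            _ = s ^ (Multiset.card m + 1 - (e+1)) := by rw [← pow_succ']; congr 1; omega
        · calc ‖a‖ * ‖Q.coeff (e+1)‖ ≤ s * s ^ (Multiset.card m - (e+1)) :=
              mul_le_mul ha (ihm (e+1)) (norm_nonneg _) hs0
            _ ≤ 1 * 1 := by
              apply mul_le_mul hs1 _ (pow_nonneg hs0 _) zero_le_one
              rw [show Multiset.card m - (e+1) = 0 by omega, pow_zero]
            _ = s ^ (Multiset.card m + 1 - (e+1)) := by
              rw [show Multiset.card m + 1 - (e+1) = Multiset.card m - e by omega,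
                show Multiset.card m - e = 0 by omega, pow_zero, one_mul]

variable [CompleteSpace K] [IsAlgClosed K]

lemma coeff_bound_of_roots {g : K[X]} (hm : g.Monic) {s : ℝ} (hs0 : 0 ≤ s) (hs1 : s ≤ 1)
    (hroots : ∀ lam, g.IsRoot lam → ‖lam‖ ≤ s) :
    ∀ i, ‖g.coeff i‖ ≤ s ^ (g.natDegree - i) := by
  have hsplit : g.Splits := IsAlgClosed.splits g
  have hprod := hsplit.eq_prod_roots_of_monic hm
  have hcard : Multiset.card g.roots = g.natDegree := (splits_iff_card_roots).mp hsplit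
  intro i
  have := multiset_prod_coeff_bound s hs0 hs1 g.roots
    (fun x hx => hroots x (mem_roots'.mp hx).2) i
  rw [← hprod, hcard] at this
  exact this

lemma norm_eval_eq_of_roots {g : K[X]} (hm : g.Monic) {lam : K} {s : ℝ} (hs0 : 0 ≤ s)
    (hroots : ∀ x, g.IsRoot x → ‖x‖ ≤ s) (hlam : s < ‖lam‖) :
    ‖g.eval lam‖ = ‖lam‖ ^ g.natDegree := by
  have hsplit : g.Splits := IsAlgClosed.splits g
  have hprod := hsplit.eq_prod_roots_of_monic hm
  have hcard : Multiset.card g.roots = g.natDegree := (splits_iff_card_roots).mp hsplit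
  have key : ∀ (m : Multiset K), (∀ x ∈ m, ‖x‖ ≤ s) →
      ‖((m.map fun a => X - C a).prod).eval lam‖ = ‖lam‖ ^ Multiset.card m := by
    intro m
    induction m using Multiset.induction_on with
    | empty => intro _; simp
    | cons a m ih =>
      intro hmem
      rw [Multiset.map_cons, Multiset.prod_cons, Multiset.card_cons, eval_mul, norm_mul,
        ih (fun x hx => hmem x (Multiset.mem_cons_of_mem hx))]
      have ha : ‖a‖ < ‖lam‖ := lt_of_le_of_lt (hmem a (Multiset.mem_cons_self a m)) hlam
      have : ‖(X - C a).eval lam‖ = ‖lam‖ := by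
        rw [eval_sub, eval_X, eval_C, sub_eq_add_neg]
        rw [IsUltrametricDist.norm_add_eq_max_of_norm_ne_norm]
        · rw [norm_neg]; exact max_eq_left ha.le
        · rw [norm_neg]; exact ne_of_gt ha
      rw [this, pow_succ]
      ring
  calc ‖g.eval lam‖ = ‖((g.roots.map fun a => X - C a).prod).eval lam‖ := by rw [← hprod]
    _ = ‖lam‖ ^ Multiset.card g.roots :=
        key g.roots (fun x hx => hroots x (mem_roots'.mp hx).2)
    _ = ‖lam‖ ^ g.natDegree := by rw [hcard]

end Roots

/-! ### charpoly, eval and spectrum -/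
section Charpoly
variable {K : Type*} [Field K] {n : ℕ}

open Polynomial

lemma charpoly_eval (M : Matrix (Fin n) (Fin n) K) (t : K) :
    (Matrix.charpoly M).eval t = (Matrix.scalar (Fin n) t - M).det := by
  rw [Matrix.charpoly, ← coe_evalRingHom, RingHom.map_det]
  congr 1
  ext i j
  rcases eq_or_ne i j with rfl | h
  · simp [Matrix.charmatrix_apply_eq, Matrix.scalar_apply, Matrix.diagonal_apply_eq,
      Matrix.sub_apply]
  · simp [Matrix.charmatrix_apply_ne _ _ _ h, Matrix.scalar_apply, Matrix.diagonal_apply_ne _ h,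
      Matrix.sub_apply]

lemma isRoot_charpoly_iff_spectrum (hn : 0 < n) (M : Matrix (Fin n) (Fin n) K) (mu : K) :
    (Matrix.charpoly M).IsRoot mu ↔ mu ∈ spectrum K M := by
  haveI : Nonempty (Fin n) := ⟨⟨0, hn⟩⟩
  rw [spectrum.mem_iff, IsRoot, charpoly_eval]
  rw [Matrix.isUnit_iff_isUnit_det]
  rw [isUnit_iff_ne_zero, not_ne_iff]
  have halg : (algebraMap K (Matrix (Fin n) (Fin n) K)) mu = Matrix.scalar (Fin n) mu := rfl
  rw [halg]

end Charpoly

/-! ### Real helpers -/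
section RealHelpers

lemma key_term_bound {a q r : ℝ} (d : ℕ) (ha : 0 ≤ a) (hq : 0 < q) (hr : 0 ≤ r)
    (h : a * q ^ d ≤ q) : a * r ^ d ≤ q * (r / q) ^ d := by
  have hrd : r ^ d = q ^ d * (r / q) ^ d := by
    rw [div_pow]
    field_simp
  rw [hrd, ← mul_assoc]
  exact mul_le_mul_of_nonneg_right h (pow_nonneg (div_nonneg hr hq.le) d)

lemma coeff_rpow_le_one {a q r : ℝ} {v : ℕ} (hv : 1 ≤ v) (ha : 0 ≤ a) (hq : 0 < q)
    (hr : 0 ≤ r) (hrq : r ≤ q) (h : a * q ^ v ≤ q) : a * r ^ (v - 1) ≤ 1 := by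
  have h1 : a * q ^ (v - 1) ≤ 1 := by
    have hsplit : q ^ v = q ^ (v - 1) * q := by
      rw [← pow_succ]; congr 1; omega
    rw [hsplit, ← mul_assoc] at h
    have h2 : (a * q ^ (v-1)) * q ≤ 1 * q := by linarith
    exact le_of_mul_le_mul_right h2 hq
  calc a * r ^ (v-1) ≤ a * q ^ (v-1) :=
        mul_le_mul_of_nonneg_left (pow_le_pow_left₀ hr hrq _) ha
    _ ≤ 1 := h1

lemma coeff_rpow_le_q {a q r : ℝ} {v : ℕ} (hv : 1 ≤ v) (ha : 0 ≤ a) (hq : 0 < q)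
    (hr : 0 ≤ r) (hrq : r ≤ q) (h : a * q ^ v ≤ q) : a * r ^ v ≤ q := by
  calc a * r ^ v ≤ q * (r / q) ^ v := key_term_bound v ha hq hr h
    _ ≤ q * 1 := by
      apply mul_le_mul_of_nonneg_left _ hq.le
      exact pow_le_one₀ (div_nonneg hr hq.le) ((div_le_one hq).mpr hrq)
    _ = q := mul_one q

end RealHelpers

/-! ### Convergence of the series -/
section Conv
variable {K : Type*} [NontriviallyNormedField K] [IsUltrametricDist K] [CompleteSpace K] {n : ℕ}

lemma tendsto_entry {S : ℕ → Matrix (Fin n) (Fin n) K} {Y : Matrix (Fin n) (Fin n) K}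
    (h : Filter.Tendsto S Filter.atTop (nhds Y)) (i j : Fin n) :
    Filter.Tendsto (fun N => S N i j) Filter.atTop (nhds (Y i j)) := by
  have h1 := tendsto_pi_nhds.mp h i
  exact tendsto_pi_nhds.mp h1 j

lemma tendsto_of_entries {S : ℕ → Matrix (Fin n) (Fin n) K} {Y : Matrix (Fin n) (Fin n) K}
    (h : ∀ i j, Filter.Tendsto (fun N => S N i j) Filter.atTop (nhds (Y i j))) :
    Filter.Tendsto S Filter.atTop (nhds Y) := by
  apply tendsto_pi_nhds.mpr
  intro i
  apply tendsto_pi_nhds.mpr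
  intro j
  exact h i j

lemma Eb_partial_sums {A : Matrix (Fin n) (Fin n) K} {a : ℕ → K} {q r C : ℝ}
    (hq : 0 < q) (hr : 0 < r) (hrq : r ≤ q) (hC : 0 ≤ C)
    (hab : ∀ v, 1 ≤ v → ‖a v‖ * q ^ v ≤ q)
    (hpow : ∀ v, Eb (A ^ v) (C * r ^ v)) (N : ℕ) :
    Eb (∑ v ∈ Finset.Icc 1 N, a v • A ^ v) (C * q) := by
  apply Eb.sum (by positivity)
  intro v hv
  have hv1 : 1 ≤ v := (Finset.mem_Icc.mp hv).1
  refine (Eb.smul (a v) (hpow v)).mono ?_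
  calc ‖a v‖ * (C * r ^ v) = C * (‖a v‖ * r ^ v) := by ring
    _ ≤ C * q := by
      apply mul_le_mul_of_nonneg_left _ hC
      exact coeff_rpow_le_q hv1 (norm_nonneg _) hq hr.le hrq (hab v hv1)

lemma exists_series_limit {A : Matrix (Fin n) (Fin n) K} {a : ℕ → K} {q r C : ℝ}
    (hq : 0 < q) (hr : 0 < r) (hrq : r < q) (hC : 0 ≤ C)
    (hab : ∀ v, 1 ≤ v → ‖a v‖ * q ^ v ≤ q)
    (hpow : ∀ v, Eb (A ^ v) (C * r ^ v)) :
    ∃ Y, Filter.Tendsto (fun N => ∑ v ∈ Finset.Icc 1 N, a v • A ^ v)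
      Filter.atTop (nhds Y) := by
  set S : ℕ → Matrix (Fin n) (Fin n) K := fun N => ∑ v ∈ Finset.Icc 1 N, a v • A ^ v with hS
  have hstep : ∀ N, S (N + 1) - S N = a (N+1) • A ^ (N+1) := by
    intro N
    rw [hS]
    simp only
    rw [Finset.sum_Icc_succ_top (by omega : 1 ≤ N + 1)]
    abel
  have hgeo : Filter.Tendsto (fun N : ℕ => C * (q * (r/q) ^ (N+1))) Filter.atTop (nhds 0) := by
    have h1 : Filter.Tendsto (fun N : ℕ => (r/q) ^ (N+1)) Filter.atTop (nhds 0) := by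
      have h0 : Filter.Tendsto (fun N : ℕ => (r/q) ^ N) Filter.atTop (nhds 0) :=
        tendsto_pow_atTop_nhds_zero_of_lt_one (div_nonneg hr.le hq.le)
          ((div_lt_one hq).mpr hrq)
      exact h0.comp (Filter.tendsto_add_atTop_nat 1)
    have := (h1.const_mul (C * q))
    simpa [mul_assoc, mul_comm, mul_left_comm] using this
  have hlim : ∀ i j, ∃ y, Filter.Tendsto (fun N => S N i j) Filter.atTop (nhds y) := by
    intro i j
    apply cauchySeq_tendsto_of_complete
    apply ucauchy
    apply squeeze_zero (fun N => norm_nonneg _) _ hgeo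
    intro N
    have hsub : S (N+1) i j - S N i j = (a (N+1) • A ^ (N+1)) i j := by
      rw [← Matrix.sub_apply, hstep N]
    rw [hsub]
    have := (Eb.smul (a (N+1)) (hpow (N+1))) i j
    refine le_trans this ?_
    calc ‖a (N+1)‖ * (C * r ^ (N+1)) = C * (‖a (N+1)‖ * r ^ (N+1)) := by ring
      _ ≤ C * (q * (r/q) ^ (N+1)) := by
        apply mul_le_mul_of_nonneg_left _ hC
        exact key_term_bound (N+1) (norm_nonneg _) hq hr.le (hab (N+1) (by omega))
  choose Y hY using hlim
  exact ⟨fun i j => Y i j, tendsto_of_entries hY⟩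

end Conv

/-! ### Uniform power bounds from spectral data -/
section PowUnif
variable {K : Type*} [NontriviallyNormedField K] [IsUltrametricDist K]
  [CompleteSpace K] [IsAlgClosed K] {n : ℕ}

open Polynomial

lemma pow_bound_unif (B : Matrix (Fin n) (Fin n) K) {s r D : ℝ}
    (hs0 : 0 ≤ s) (hs1 : s ≤ 1) (hsr : s ≤ r) (hr : 0 < r)
    (hroots : ∀ lam, (Matrix.charpoly B).IsRoot lam → ‖lam‖ ≤ s)
    (hD : Eb B D) :
    ∀ v, Eb (B ^ v) ((max (max D r / r) 1) ^ (n - 1) * r ^ v) := by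
  set C₁ : ℝ := (max (max D r / r) 1) ^ (n - 1) with hC₁
  have hbase1 : (1:ℝ) ≤ max (max D r / r) 1 := le_max_right _ _
  have hC₁1 : (1:ℝ) ≤ C₁ := one_le_pow₀ hbase1
  have hC₁0 : (0:ℝ) ≤ C₁ := by linarith
  apply Eb_pow_growth B r C₁ hr hC₁0
  · intro i hi
    have hcb := coeff_bound_of_roots (Matrix.charpoly_monic B) hs0 hs1 hroots i
    rw [Matrix.charpoly_natDegree_eq_dim, Fintype.card_fin] at hcb
    calc ‖(Matrix.charpoly B).coeff i‖ ≤ s ^ (n - i) := hcb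
      _ ≤ r ^ (n - i) := pow_le_pow_left₀ hs0 hsr _
  · intro v hv
    rcases Nat.eq_zero_or_pos v with rfl | hv1
    · refine Eb.one.mono ?_
      rw [pow_zero, mul_one]
      exact hC₁1
    · have hDr : Eb B (max D r) := hD.mono (le_max_left _ _)
      have h1 : Eb (B ^ v) ((max D r) ^ v) :=
        Eb.pow (le_trans hr.le (le_max_right _ _)) hDr v hv1
      refine h1.mono ?_
      have hexp : (max D r) ^ v = (max D r / r) ^ v * r ^ v := by
        rw [div_pow]
        field_simp
      rw [hexp]
      apply mul_le_mul_of_nonneg_right _ (pow_nonneg hr.le v)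
      have hdiv1 : (1:ℝ) ≤ max D r / r := (one_le_div hr).mpr (le_max_right _ _)
      calc (max D r / r) ^ v ≤ (max (max D r / r) 1) ^ v :=
            pow_le_pow_left₀ (by linarith) (le_max_left _ _) v
        _ ≤ (max (max D r / r) 1) ^ (n - 1) :=
            pow_le_pow_right₀ hbase1 (by omega)

lemma roots_aeval_bound (hn : 0 < n) (A : Matrix (Fin n) (Fin n) K) {q s : ℝ}
    (hq : 0 < q) (hs0 : 0 ≤ s) (hsq : s ≤ q) {g : K[X]} (hdeg : 0 < g.degree)
    (hg0 : g.coeff 0 = 0) (hgb : ∀ d, 1 ≤ d → ‖g.coeff d‖ * q ^ d ≤ q)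
    (hroots : ∀ lam, (Matrix.charpoly A).IsRoot lam → ‖lam‖ ≤ s) :
    ∀ mu, (Matrix.charpoly (Polynomial.aeval A g)).IsRoot mu → ‖mu‖ ≤ s := by
  haveI : Nonempty (Fin n) := ⟨⟨0, hn⟩⟩
  intro mu hmu
  rw [isRoot_charpoly_iff_spectrum hn] at hmu
  rw [spectrum.map_polynomial_aeval_of_degree_pos A g hdeg] at hmu
  obtain ⟨lam, hlam, rfl⟩ := hmu
  rw [← isRoot_charpoly_iff_spectrum hn] at hlam
  have hl : ‖lam‖ ≤ s := hroots lam hlam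
  show ‖Polynomial.eval lam g‖ ≤ s
  rw [Polynomial.eval_eq_sum_range]
  apply usum hs0
  intro i _
  rcases Nat.eq_zero_or_pos i with rfl | hi
  · rw [hg0]
    simpa using hs0
  · rw [norm_mul, norm_pow]
    calc ‖g.coeff i‖ * ‖lam‖ ^ i ≤ ‖g.coeff i‖ * s ^ i :=
          mul_le_mul_of_nonneg_left (pow_le_pow_left₀ (norm_nonneg _) hl i) (norm_nonneg _)
      _ ≤ q * (s/q) ^ i := key_term_bound i (norm_nonneg _) hq hs0 (hgb i hi)
      _ ≤ q * (s/q) ^ 1 := by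
          apply mul_le_mul_of_nonneg_left _ hq.le
          exact pow_le_pow_of_le_one (div_nonneg hs0 hq.le) ((div_le_one hq).mpr hsq) hi
      _ = s := by field_simp

lemma roots_limit_bound (hn : 0 < n) {S : ℕ → Matrix (Fin n) (Fin n) K}
    {Y : Matrix (Fin n) (Fin n) K} (hS : Filter.Tendsto S Filter.atTop (nhds Y))
    {s : ℝ} (hs0 : 0 ≤ s)
    (hroots : ∀ᶠ N in Filter.atTop, ∀ mu, (Matrix.charpoly (S N)).IsRoot mu → ‖mu‖ ≤ s) :
    ∀ lam, (Matrix.charpoly Y).IsRoot lam → ‖lam‖ ≤ s := by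
  intro lam hlam
  by_contra hcon
  push_neg at hcon
  have hlam0 : (0:ℝ) < ‖lam‖ := lt_of_le_of_lt hs0 hcon
  have hdetcont : Filter.Tendsto (fun N => (Matrix.scalar (Fin n) lam - S N).det)
      Filter.atTop (nhds ((Matrix.scalar (Fin n) lam - Y).det)) := by
    have hc : Continuous (fun M : Matrix (Fin n) (Fin n) K =>
        (Matrix.scalar (Fin n) lam - M).det) :=
      (continuous_const.sub continuous_id).matrix_det
    exact (hc.tendsto Y).comp hS
  have hnorm : Filter.Tendsto (fun N => ‖(Matrix.scalar (Fin n) lam - S N).det‖)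
      Filter.atTop (nhds ‖(Matrix.scalar (Fin n) lam - Y).det‖) :=
    hdetcont.norm
  have hev : ∀ᶠ N in Filter.atTop, ‖(Matrix.scalar (Fin n) lam - S N).det‖ = ‖lam‖ ^ n := by
    filter_upwards [hroots] with N hN
    have heval := norm_eval_eq_of_roots (Matrix.charpoly_monic (S N)) hs0 hN hcon
    rw [charpoly_eval] at heval
    rw [heval, Matrix.charpoly_natDegree_eq_dim, Fintype.card_fin]
  have hlim : ‖(Matrix.scalar (Fin n) lam - Y).det‖ = ‖lam‖ ^ n := by
    have h2 : Filter.Tendsto (fun _ : ℕ => ‖lam‖ ^ n) Filter.atTop (nhds (‖lam‖ ^ n)) :=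
      tendsto_const_nhds
    exact tendsto_nhds_unique (hnorm.congr' hev) h2
  have : (Matrix.charpoly Y).eval lam ≠ 0 := by
    rw [charpoly_eval]
    intro h0
    rw [h0, norm_zero] at hlim
    exact absurd hlim.symm (ne_of_gt (pow_pos hlam0 n))
  exact this hlam

lemma exists_sr {q : ℝ} (hq : 0 < q) {A : Matrix (Fin n) (Fin n) K}
    (hA : ∀ lam, (Matrix.charpoly A).IsRoot lam → ‖lam‖ < q) :
    ∃ s r, 0 ≤ s ∧ s ≤ r ∧ 0 < r ∧ r < q ∧ s < q ∧
      ∀ lam, (Matrix.charpoly A).IsRoot lam → ‖lam‖ ≤ s := by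
  classical
  set F := (Matrix.charpoly A).roots.toFinset with hF
  have hmemF : ∀ lam, (Matrix.charpoly A).IsRoot lam → lam ∈ F := by
    intro lam hlam
    rw [hF, Multiset.mem_toFinset, Polynomial.mem_roots']
    exact ⟨(Matrix.charpoly_monic A).ne_zero, hlam⟩
  rcases F.eq_empty_or_nonempty with hemp | hne
  · refine ⟨0, q/2, le_refl 0, by linarith, by linarith, by linarith, hq, ?_⟩
    intro lam hlam
    exact absurd (hmemF lam hlam) (by rw [hemp]; exact Finset.notMem_empty lam)
  · set s := F.sup' hne (fun l => ‖l‖) with hs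
    have hs0 : 0 ≤ s := by
      obtain ⟨x, hx⟩ := hne
      exact le_trans (norm_nonneg x) (Finset.le_sup' _ hx)
    have hsq : s < q := by
      rw [hs, Finset.sup'_lt_iff]
      intro l hl
      apply hA
      rw [hF, Multiset.mem_toFinset, Polynomial.mem_roots'] at hl
      exact hl.2
    refine ⟨s, max s (q/2), hs0, le_max_left _ _, lt_max_of_lt_right (by linarith),
      max_lt hsq (by linarith), hsq, ?_⟩
    intro lam hlam
    exact Finset.le_sup' _ (hmemF lam hlam)

end PowUnif

/-! ### aeval of series polynomials and tail bounds -/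
section Aeval
variable {K : Type*} [NontriviallyNormedField K] [IsUltrametricDist K]
  [CompleteSpace K] [IsAlgClosed K] [CharZero K] {n : ℕ}

open Polynomial

lemma aeval_seriesPoly (a : ℕ → K) (N : ℕ) (A : Matrix (Fin n) (Fin n) K) :
    Polynomial.aeval A (seriesPoly a N) = ∑ v ∈ Finset.Icc 1 N, a v • A ^ v := by
  rw [seriesPoly, map_sum]
  refine Finset.sum_congr rfl (fun v _ => ?_)
  rw [map_mul, aeval_C, map_pow, aeval_X, Algebra.smul_def]

lemma seriesPoly_degree_pos {a : ℕ → K} (ha1 : a 1 = 1) {N : ℕ} (hN : 1 ≤ N) :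
    0 < (seriesPoly a N).degree := by
  apply natDegree_pos_iff_degree_pos.mp
  apply le_natDegree_of_ne_zero (n := 1)
  rw [seriesPoly_coeff, if_pos ⟨le_refl 1, hN⟩, ha1]
  exact one_ne_zero

lemma seriesPoly_coeff_bound {a : ℕ → K} {q : ℝ} (hq : 0 < q)
    (hab : ∀ v, 1 ≤ v → ‖a v‖ * q ^ v ≤ q) (N : ℕ) :
    ∀ d, 1 ≤ d → ‖(seriesPoly a N).coeff d‖ * q ^ d ≤ q := by
  intro d hd
  rw [seriesPoly_coeff]
  rcases Decidable.em (1 ≤ d ∧ d ≤ N) with h | h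
  · rw [if_pos h]; exact hab d hd
  · rw [if_neg h, norm_zero, zero_mul]; exact hq.le

lemma geom_tail_tendsto {C q r : ℝ} (hq : 0 < q) (hr : 0 < r) (hrq : r < q) :
    Filter.Tendsto (fun N : ℕ => C * (q * (r/q) ^ (N+1))) Filter.atTop (nhds 0) := by
  have h0 : Filter.Tendsto (fun N : ℕ => (r/q) ^ N) Filter.atTop (nhds 0) :=
    tendsto_pow_atTop_nhds_zero_of_lt_one (div_nonneg hr.le hq.le) ((div_lt_one hq).mpr hrq)
  have h1 := (h0.comp (Filter.tendsto_add_atTop_nat 1)).const_mul (C * q)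
  simpa [Function.comp, mul_assoc, mul_comm, mul_left_comm] using h1

lemma Eb_aeval_tail {A : Matrix (Fin n) (Fin n) K} {f : K[X]} {q r C : ℝ} {N : ℕ}
    (hq : 0 < q) (hr : 0 < r) (hrq : r ≤ q) (hC : 0 ≤ C)
    (hvan : ∀ d ≤ N, f.coeff d = 0)
    (hgb : ∀ d, 1 ≤ d → ‖f.coeff d‖ * q ^ d ≤ q)
    (hpow : ∀ v, Eb (A ^ v) (C * r ^ v)) :
    Eb (Polynomial.aeval A f) (C * (q * (r/q) ^ (N+1))) := by
  have hb0 : (0:ℝ) ≤ C * (q * (r/q) ^ (N+1)) := by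
    apply mul_nonneg hC
    exact mul_nonneg hq.le (pow_nonneg (div_nonneg hr.le hq.le) _)
  rw [Polynomial.aeval_eq_sum_range]
  apply Eb.sum hb0
  intro i _
  rcases Nat.lt_or_ge N i with hi | hi
  · have hi1 : 1 ≤ i := by omega
    refine (Eb.smul (f.coeff i) (hpow i)).mono ?_
    calc ‖f.coeff i‖ * (C * r ^ i) = C * (‖f.coeff i‖ * r ^ i) := by ring
      _ ≤ C * (q * (r/q) ^ i) := by
          apply mul_le_mul_of_nonneg_left _ hC
          exact key_term_bound i (norm_nonneg _) hq hr.le (hgb i hi1)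
      _ ≤ C * (q * (r/q) ^ (N+1)) := by
          apply mul_le_mul_of_nonneg_left _ hC
          apply mul_le_mul_of_nonneg_left _ hq.le
          exact pow_le_pow_of_le_one (div_nonneg hr.le hq.le) ((div_le_one hq).mpr hrq)
            (by omega)
  · rw [hvan i hi, zero_smul]
    exact Eb.zero hb0

lemma limit_roots_le (hn : 1 ≤ n) {A : Matrix (Fin n) (Fin n) K} {a : ℕ → K}
    {q s r C : ℝ} (hq : 0 < q) (hr : 0 < r) (hrq : r < q) (hC : 0 ≤ C)
    (hs0 : 0 ≤ s) (hsq : s ≤ q) (ha1 : a 1 = 1)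
    (hab : ∀ v, 1 ≤ v → ‖a v‖ * q ^ v ≤ q)
    (hroots : ∀ lam, (Matrix.charpoly A).IsRoot lam → ‖lam‖ ≤ s)
    {Y : Matrix (Fin n) (Fin n) K}
    (hY : Filter.Tendsto (fun N => ∑ v ∈ Finset.Icc 1 N, a v • A ^ v)
      Filter.atTop (nhds Y)) :
    ∀ lam, (Matrix.charpoly Y).IsRoot lam → ‖lam‖ ≤ s := by
  apply roots_limit_bound (by omega : 0 < n) hY hs0
  rw [Filter.eventually_atTop]
  refine ⟨1, fun N hN => ?_⟩
  have hSN : (∑ v ∈ Finset.Icc 1 N, a v • A ^ v) = Polynomial.aeval A (seriesPoly a N) :=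
    (aeval_seriesPoly a N A).symm
  rw [hSN]
  exact roots_aeval_bound (by omega) A hq hs0 hsq (seriesPoly_degree_pos ha1 hN)
    (seriesPoly_coeff_zero a N) (seriesPoly_coeff_bound hq hab N) hroots

end Aeval

/-! ### The composition argument -/
section Comp
variable {K : Type*} [NontriviallyNormedField K] [IsUltrametricDist K]
  [CompleteSpace K] [IsAlgClosed K] [CharZero K] {n : ℕ}

open Polynomial

lemma comp_limits (hn : 1 ≤ n) {A : Matrix (Fin n) (Fin n) K} {a b : ℕ → K} {q : ℝ}
    (hq : 0 < q) (hq1 : q < 1) (ha1 : a 1 = 1)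
    (hab : ∀ v, 1 ≤ v → ‖a v‖ * q ^ v ≤ q)
    (hbb : ∀ v, 1 ≤ v → ‖b v‖ * q ^ v ≤ q)
    (hA : ∀ lam, (Matrix.charpoly A).IsRoot lam → ‖lam‖ < q)
    (hcomp : ∀ N, 1 ≤ N → ∀ d ≤ N,
      ((seriesPoly b N).comp (seriesPoly a N)).coeff d = if d = 1 then 1 else 0)
    {Y Z : Matrix (Fin n) (Fin n) K}
    (hY : Filter.Tendsto (fun N => ∑ v ∈ Finset.Icc 1 N, a v • A ^ v)
      Filter.atTop (nhds Y))
    (hZ : Filter.Tendsto (fun N => ∑ v ∈ Finset.Icc 1 N, b v • Y ^ v)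
      Filter.atTop (nhds Z)) :
    Z = A := by
  classical
  haveI : Nonempty (Fin n) := ⟨⟨0, by omega⟩⟩
  obtain ⟨s, r, hs0, hsr, hr, hrq, hsq, hroots⟩ := exists_sr hq hA
  have hs1 : s ≤ 1 := by linarith
  -- entrywise sup of a matrix
  have hneP : (Finset.univ : Finset (Fin n × Fin n)).Nonempty :=
    ⟨(⟨0, by omega⟩, ⟨0, by omega⟩), Finset.mem_univ _⟩
  set msup : Matrix (Fin n) (Fin n) K → ℝ :=
    fun B => Finset.univ.sup' hneP (fun ij => ‖B ij.1 ij.2‖) with hmsup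
  have hEb_msup : ∀ B : Matrix (Fin n) (Fin n) K, Eb B (msup B) := by
    intro B i j
    exact Finset.le_sup' (fun ij : Fin n × Fin n => ‖B ij.1 ij.2‖)
      (Finset.mem_univ (i, j))
  have hmsup0 : ∀ B : Matrix (Fin n) (Fin n) K, 0 ≤ msup B := by
    intro B
    exact le_trans (norm_nonneg _) (hEb_msup B ⟨0, by omega⟩ ⟨0, by omega⟩)
  -- power bounds for A
  set CA : ℝ := (max (max (msup A) r / r) 1) ^ (n - 1) with hCA
  have hApow : ∀ v, Eb (A ^ v) (CA * r ^ v) :=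
    pow_bound_unif A hs0 hs1 hsr hr hroots (hEb_msup A)
  have hCA1 : (1:ℝ) ≤ CA := one_le_pow₀ (le_max_right _ _)
  have hCA0 : (0:ℝ) ≤ CA := by linarith
  -- the partial sums
  set S : ℕ → Matrix (Fin n) (Fin n) K := fun N => ∑ v ∈ Finset.Icc 1 N, a v • A ^ v with hSdef
  have hSaeval : ∀ N, S N = Polynomial.aeval A (seriesPoly a N) :=
    fun N => (aeval_seriesPoly a N A).symm
  have hSD : ∀ N, Eb (S N) (CA * q) :=
    fun N => Eb_partial_sums hq hr hrq.le hCA0 hab hApow N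
  have hYD : Eb Y (CA * q) := by
    intro i j
    refine le_of_tendsto ((tendsto_entry hY i j).norm) ?_
    exact Filter.Eventually.of_forall (fun N => hSD N i j)
  -- spectral bounds for S N and Y
  have hSroots : ∀ N, 1 ≤ N →
      ∀ mu, (Matrix.charpoly (S N)).IsRoot mu → ‖mu‖ ≤ s := by
    intro N hN
    rw [hSaeval N]
    exact roots_aeval_bound (by omega) A hq hs0 (by linarith) (seriesPoly_degree_pos ha1 hN)
      (seriesPoly_coeff_zero a N) (seriesPoly_coeff_bound hq hab N) hroots
  have hYroots : ∀ lam, (Matrix.charpoly Y).IsRoot lam → ‖lam‖ ≤ s :=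
    limit_roots_le hn hq hr hrq hCA0 hs0 (by linarith) ha1 hab hroots hY
  -- uniform power bounds
  set C₁ : ℝ := (max (max (CA * q) r / r) 1) ^ (n - 1) with hC₁
  have hC₁1 : (1:ℝ) ≤ C₁ := one_le_pow₀ (le_max_right _ _)
  have hC₁0 : (0:ℝ) ≤ C₁ := by linarith
  have hSpow : ∀ N, 1 ≤ N → ∀ v, Eb ((S N) ^ v) (C₁ * r ^ v) := by
    intro N hN
    exact pow_bound_unif (S N) hs0 hs1 hsr hr (hSroots N hN) (hSD N)
  have hYpow : ∀ v, Eb (Y ^ v) (C₁ * r ^ v) :=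
    pow_bound_unif Y hs0 hs1 hsr hr hYroots hYD
  -- commutation
  have hSS : ∀ N M, Commute (S N) (S M) := by
    intro N M
    apply Commute.sum_left
    intro v _
    apply Commute.sum_right
    intro w _
    exact ((Commute.refl A).pow_pow v w).smul_left (a v) |>.smul_right (a w)
  have hcomm : ∀ N, Commute (S N) Y := by
    intro N
    have hmulcont : Filter.Tendsto (fun M => S N * S M) Filter.atTop (nhds (S N * Y)) := by
      have hc : Continuous (fun B : Matrix (Fin n) (Fin n) K => S N * B) :=
        continuous_const.matrix_mul continuous_id
      exact (hc.tendsto Y).comp hY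
    have hmulcont' : Filter.Tendsto (fun M => S M * S N) Filter.atTop (nhds (Y * S N)) := by
      have hc : Continuous (fun B : Matrix (Fin n) (Fin n) K => B * S N) :=
        continuous_id.matrix_mul continuous_const
      exact (hc.tendsto Y).comp hY
    have : Filter.Tendsto (fun M => S N * S M) Filter.atTop (nhds (Y * S N)) := by
      refine hmulcont'.congr (fun M => ?_)
      exact (hSS N M).symm
    exact tendsto_nhds_unique hmulcont this
  -- the entrywise sup distance from S N to Y
  set eps : ℕ → ℝ := fun N => msup (S N - Y) with heps
  have hEbSY : ∀ N, Eb (S N - Y) (eps N) := fun N => hEb_msup _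
  have heps0 : ∀ N, 0 ≤ eps N := fun N => hmsup0 _
  have hepslim : Filter.Tendsto eps Filter.atTop (nhds 0) := by
    rw [Metric.tendsto_atTop]
    intro ε hε
    have hev : ∀ᶠ N in Filter.atTop, ∀ ij : Fin n × Fin n,
        ‖(S N - Y) ij.1 ij.2‖ < ε := by
      rw [Filter.eventually_all]
      intro ij
      have h1 : Filter.Tendsto (fun N => S N ij.1 ij.2 - Y ij.1 ij.2)
          Filter.atTop (nhds 0) := by
        have hconst : Filter.Tendsto (fun _ : ℕ => Y ij.1 ij.2) Filter.atTop
            (nhds (Y ij.1 ij.2)) := tendsto_const_nhds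
        have := (tendsto_entry hY ij.1 ij.2).sub hconst
        simpa using this
      have h2 := (h1.norm)
      rw [norm_zero] at h2
      have h3 := Metric.tendsto_atTop.mp h2 ε hε
      obtain ⟨N₀, hN₀⟩ := h3
      rw [Filter.eventually_atTop]
      refine ⟨N₀, fun N hN => ?_⟩
      have := hN₀ N hN
      rw [Real.dist_eq, sub_zero, abs_of_nonneg (norm_nonneg _)] at this
      simpa [Matrix.sub_apply] using this
    rw [Filter.eventually_atTop] at hev
    obtain ⟨N₀, hN₀⟩ := hev
    refine ⟨N₀, fun N hN => ?_⟩
    rw [Real.dist_eq, sub_zero, abs_of_nonneg (heps0 N)]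
    rw [heps, hmsup]
    simp only
    rw [Finset.sup'_lt_iff]
    intro ij _
    exact hN₀ N hN ij
  -- difference of powers
  have hdiffpow : ∀ N, 1 ≤ N → ∀ v, 1 ≤ v →
      Eb ((S N) ^ v - Y ^ v) (C₁ * C₁ * eps N * r ^ (v-1)) := by
    intro N hN v hv
    have hgeom := (hcomm N).geom_sum₂_mul v
    rw [← hgeom]
    have hsum : Eb (∑ i ∈ Finset.range v, (S N) ^ i * Y ^ (v - 1 - i)) (C₁ * C₁ * r ^ (v-1)) := by
      apply Eb.sum (by positivity)
      intro i hi
      have hi' : i < v := Finset.mem_range.mp hi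
      have h1 : Eb ((S N) ^ i * Y ^ (v - 1 - i))
          ((C₁ * r ^ i) * (C₁ * r ^ (v - 1 - i))) := by
        apply Eb.mul (by positivity) (by positivity) (hSpow N hN i) (hYpow (v - 1 - i))
      refine h1.mono (le_of_eq ?_)
      have hadd : i + (v - 1 - i) = v - 1 := by omega
      rw [show C₁ * C₁ * r ^ (v-1) = C₁ * C₁ * r ^ (i + (v - 1 - i)) by rw [hadd],
        pow_add]
      ring
    have := hsum.mul (by positivity) (heps0 N) (hEbSY N)
    refine this.mono (le_of_eq ?_)
    ring
  -- Z_N = aeval A (comp polynomial)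
  set G : ℕ → K[X] := fun N => (seriesPoly b N).comp (seriesPoly a N) with hG
  set ZN : ℕ → Matrix (Fin n) (Fin n) K := fun N => Polynomial.aeval A (G N) with hZN
  -- (b) : ZN tends to A
  have hZNA : Filter.Tendsto ZN Filter.atTop (nhds A) := by
    have htail : ∀ N, 1 ≤ N → Eb (ZN N - A) (CA * (q * (r/q) ^ (N+1))) := by
      intro N hN
      have hsub : ZN N - A = Polynomial.aeval A (G N - Polynomial.X) := by
        rw [map_sub, aeval_X]
      rw [hsub]
      have hGB : GBd q⁻¹ (G N) q :=
        GBd_comp hq N hbb (GBd_seriesPoly hq N hab)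
      apply Eb_aeval_tail hq hr hrq.le hCA0
      · intro d hd
        rw [Polynomial.coeff_sub, hcomp N hN d hd, Polynomial.coeff_X]
        rcases eq_or_ne d 1 with rfl | hd1
        · simp
        · rw [if_neg hd1, if_neg (fun h => hd1 h.symm), sub_zero]
      · intro d hd
        rcases Nat.lt_or_ge N d with hdN | hdN
        · have hd1 : ¬ (d = 1) := by omega
          rw [Polynomial.coeff_sub, Polynomial.coeff_X, if_neg (fun h => hd1 h.symm), sub_zero]
          exact GBd_qinv_coeff hq hGB d
        · rw [Polynomial.coeff_sub, hcomp N hN d hdN, Polynomial.coeff_X]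
          rcases eq_or_ne d 1 with rfl | hd1
          · simp [hq.le]
          · rw [if_neg hd1, if_neg (fun h => hd1 h.symm), sub_zero, norm_zero, zero_mul]
            exact hq.le
      · exact hApow
    apply tendsto_of_entries
    intro i j
    rw [tendsto_iff_dist_tendsto_zero]
    refine squeeze_zero' (Filter.Eventually.of_forall (fun N => dist_nonneg)) ?_
      (geom_tail_tendsto (C := CA) hq hr hrq)
    rw [Filter.eventually_atTop]
    refine ⟨1, fun N hN => ?_⟩
    rw [dist_eq_norm]
    have := htail N hN i j
    simpa [Matrix.sub_apply] using this
  -- ZN = partial log sums of S N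
  have hZNS : ∀ N, ZN N = ∑ v ∈ Finset.Icc 1 N, b v • (S N) ^ v := by
    intro N
    rw [hZN]
    simp only
    rw [hG]
    simp only
    rw [Polynomial.aeval_comp, ← hSaeval N, aeval_seriesPoly]
  -- (a) : ZN - TN tends to 0
  set TN : ℕ → Matrix (Fin n) (Fin n) K := fun N => ∑ v ∈ Finset.Icc 1 N, b v • Y ^ v with hTN
  have hZT : Filter.Tendsto (fun N => ZN N - TN N) Filter.atTop (nhds 0) := by
    have hEbZT : ∀ N, 1 ≤ N → Eb (ZN N - TN N) (C₁ * C₁ * eps N) := by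
      intro N hN
      have hsub : ZN N - TN N = ∑ v ∈ Finset.Icc 1 N, b v • ((S N) ^ v - Y ^ v) := by
        rw [hZNS N, hTN]
        simp only
        rw [← Finset.sum_sub_distrib]
        refine Finset.sum_congr rfl (fun v _ => ?_)
        rw [smul_sub]
      rw [hsub]
      apply Eb.sum (mul_nonneg (mul_nonneg hC₁0 hC₁0) (heps0 N))
      intro v hv
      have hv1 : 1 ≤ v := (Finset.mem_Icc.mp hv).1
      refine (Eb.smul (b v) (hdiffpow N hN v hv1)).mono ?_
      calc ‖b v‖ * (C₁ * C₁ * eps N * r ^ (v-1))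
          = (C₁ * C₁ * eps N) * (‖b v‖ * r ^ (v-1)) := by ring
        _ ≤ (C₁ * C₁ * eps N) * 1 := by
            apply mul_le_mul_of_nonneg_left _ (mul_nonneg (mul_nonneg hC₁0 hC₁0) (heps0 N))
            exact coeff_rpow_le_one hv1 (norm_nonneg _) hq hr.le hrq.le (hbb v hv1)
        _ = C₁ * C₁ * eps N := mul_one _
    have hg : Filter.Tendsto (fun N => C₁ * C₁ * eps N) Filter.atTop (nhds 0) := by
      have := hepslim.const_mul (C₁ * C₁)
      simpa using this
    apply tendsto_of_entries
    intro i j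
    rw [show (0 : Matrix (Fin n) (Fin n) K) i j = 0 from rfl,
      tendsto_iff_dist_tendsto_zero]
    refine squeeze_zero' (Filter.Eventually.of_forall (fun N => dist_nonneg)) ?_ hg
    rw [Filter.eventually_atTop]
    refine ⟨1, fun N hN => ?_⟩
    rw [dist_eq_norm, sub_zero]
    have := hEbZT N hN i j
    simpa [Matrix.sub_apply] using this
  -- conclude
  have hZNZ : Filter.Tendsto ZN Filter.atTop (nhds Z) := by
    have h1 := hZT.add hZ
    rw [zero_add] at h1
    refine h1.congr (fun N => ?_)
    simp
  exact tendsto_nhds_unique hZNZ hZNA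

end Comp

/-! ### Existence of limits in the spectral ball -/
section Exist
variable {K : Type*} [NontriviallyNormedField K] [IsUltrametricDist K]
  [CompleteSpace K] [IsAlgClosed K] [CharZero K] {n : ℕ}

lemma exists_limit_mem (hn : 1 ≤ n) {A : Matrix (Fin n) (Fin n) K} {a : ℕ → K} {q : ℝ}
    (hq : 0 < q) (hq1 : q < 1) (ha1 : a 1 = 1)
    (hab : ∀ v, 1 ≤ v → ‖a v‖ * q ^ v ≤ q)
    (hA : ∀ lam, (Matrix.charpoly A).IsRoot lam → ‖lam‖ < q) :
    ∃ Y, (∀ lam, (Matrix.charpoly Y).IsRoot lam → ‖lam‖ < q) ∧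
      Filter.Tendsto (fun N => ∑ v ∈ Finset.Icc 1 N, a v • A ^ v)
        Filter.atTop (nhds Y) := by
  classical
  haveI : Nonempty (Fin n) := ⟨⟨0, by omega⟩⟩
  obtain ⟨s, r, hs0, hsr, hr, hrq, hsq, hroots⟩ := exists_sr hq hA
  have hs1 : s ≤ 1 := by linarith
  have hneP : (Finset.univ : Finset (Fin n × Fin n)).Nonempty :=
    ⟨(⟨0, by omega⟩, ⟨0, by omega⟩), Finset.mem_univ _⟩
  set msup : ℝ := Finset.univ.sup' hneP (fun ij : Fin n × Fin n => ‖A ij.1 ij.2‖) with hmsup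
  have hEbA : Eb A msup := by
    intro i j
    exact Finset.le_sup' (fun ij : Fin n × Fin n => ‖A ij.1 ij.2‖) (Finset.mem_univ (i, j))
  set CA : ℝ := (max (max msup r / r) 1) ^ (n - 1) with hCA
  have hApow : ∀ v, Eb (A ^ v) (CA * r ^ v) :=
    pow_bound_unif A hs0 hs1 hsr hr hroots hEbA
  have hCA1 : (1:ℝ) ≤ CA := one_le_pow₀ (le_max_right _ _)
  obtain ⟨Y, hY⟩ := exists_series_limit hq hr hrq (by linarith) hab hApow
  refine ⟨Y, ?_, hY⟩
  intro lam hlam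
  have := limit_roots_le hn hq hr hrq (by linarith) hs0 (by linarith) ha1 hab hroots hY lam hlam
  linarith

end Exist

end PropB

/-- `B_n`: matrices over `K` all of whose eigenvalues `λ` satisfy `‖λ‖ < q`,
where `q = ‖p‖^{1/(p−1)}`. -/
def spectralBall (p : ℕ) (K : Type*) [NontriviallyNormedField K] (n : ℕ) :
    Set (Matrix (Fin n) (Fin n) K) :=
  {X | ∀ lam : K, (Matrix.charpoly X).IsRoot lam →
    ‖lam‖ < ‖(p : K)‖ ^ ((1 : ℝ) / ((p : ℝ) - 1))}

/-- Partial sums of the exponential series `∑_{v ≥ 1} (1/v!)·X^v`. -/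
noncomputable def matExpSums (K : Type*) [NontriviallyNormedField K] {n : ℕ}
    (X : Matrix (Fin n) (Fin n) K) (N : ℕ) : Matrix (Fin n) (Fin n) K :=
  ∑ v ∈ Finset.Icc 1 N, ((v.factorial : K))⁻¹ • X ^ v

/-- Partial sums of the logarithmic series `∑_{v ≥ 1} ((−1)^{v−1}/v)·X^v`. -/
noncomputable def matLogSums (K : Type*) [NontriviallyNormedField K] {n : ℕ}
    (X : Matrix (Fin n) (Fin n) K) (N : ℕ) : Matrix (Fin n) (Fin n) K :=
  ∑ v ∈ Finset.Icc 1 N, (((-1 : K) ^ (v - 1)) / (v : K)) • X ^ v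

/-- Proposition B.1 of the paper: over a complete algebraically closed ultrametric field of
characteristic `0` and residue characteristic `p`, the exponential and logarithmic series
converge on `B_n` and define mutually inverse bijections of `B_n` onto itself. -/
theorem matrix_exp_log_spectralBall (p : ℕ) [Fact p.Prime] (K : Type*)
    [NontriviallyNormedField K] [CompleteSpace K] [IsAlgClosed K] [CharZero K]
    [IsUltrametricDist K] (hpK : ‖(p : K)‖ < 1) (n : ℕ) (hn : 1 ≤ n) :
    (∀ X ∈ spectralBall p K n, ∃ eX ∈ spectralBall p K n,
      Tendsto (matExpSums K X) atTop (nhds eX)) ∧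
    (∀ X ∈ spectralBall p K n, ∃ lX ∈ spectralBall p K n,
      Tendsto (matLogSums K X) atTop (nhds lX)) ∧
    (∀ X ∈ spectralBall p K n, ∀ Y Z, Tendsto (matExpSums K X) atTop (nhds Y) →
      Tendsto (matLogSums K Y) atTop (nhds Z) → Z = X) ∧
    (∀ X ∈ spectralBall p K n, ∀ Y Z, Tendsto (matLogSums K X) atTop (nhds Y) →
      Tendsto (matExpSums K Y) atTop (nhds Z) → Z = X) := by
  have hq : 0 < PropB.qq p K := PropB.qq_pos hpK
  have hq1 : PropB.qq p K < 1 := PropB.qq_lt_one hpK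
  have habE : ∀ v, 1 ≤ v → ‖(PropB.eaf v : K)‖ * PropB.qq p K ^ v ≤ PropB.qq p K :=
    fun v hv => PropB.eaf_bound hpK hv
  have habL : ∀ v, 1 ≤ v → ‖(PropB.laf v : K)‖ * PropB.qq p K ^ v ≤ PropB.qq p K :=
    fun v hv => PropB.laf_bound hpK hv
  have hexp : ∀ X : Matrix (Fin n) (Fin n) K,
      matExpSums K X = fun N => ∑ v ∈ Finset.Icc 1 N, (PropB.eaf v : K) • X ^ v := by
    intro X; rfl
  have hlog : ∀ X : Matrix (Fin n) (Fin n) K,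
      matLogSums K X = fun N => ∑ v ∈ Finset.Icc 1 N, (PropB.laf v : K) • X ^ v := by
    intro X; rfl
  have hball : ∀ X : Matrix (Fin n) (Fin n) K, X ∈ spectralBall p K n ↔
      (∀ lam, (Matrix.charpoly X).IsRoot lam → ‖lam‖ < PropB.qq p K) := by
    intro X; exact Iff.rfl
  refine ⟨?_, ?_, ?_, ?_⟩
  · intro X hX
    obtain ⟨Y, hYmem, hY⟩ := PropB.exists_limit_mem hn hq hq1 PropB.eaf_one habE
      ((hball X).mp hX)
    exact ⟨Y, (hball Y).mpr hYmem, by rw [hexp X]; exact hY⟩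
  · intro X hX
    obtain ⟨Y, hYmem, hY⟩ := PropB.exists_limit_mem hn hq hq1 PropB.laf_one habL
      ((hball X).mp hX)
    exact ⟨Y, (hball Y).mpr hYmem, by rw [hlog X]; exact hY⟩
  · intro X hX Y Z hY hZ
    rw [hexp X] at hY
    rw [hlog Y] at hZ
    exact PropB.comp_limits hn hq hq1 PropB.eaf_one habE habL ((hball X).mp hX)
      (fun N hN => PropB.comp_LE_coeff N hN) hY hZ
  · intro X hX Y Z hY hZ
    rw [hlog X] at hY
    rw [hexp Y] at hZ
    exact PropB.comp_limits hn hq hq1 PropB.laf_one habL habE ((hball X).mp hX)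
      (fun N hN => PropB.comp_EL_coeff N hN) hY hZ
end
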